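/- arXiv:1307.1826 — 10 statements merged into one kernel-verified Lean document; each statement's English description precedes it below -/
import Mathlib

section
/- Let X be a real Banach space, f : X → ℝ ∪ {+∞} a proper lower semicontinuous function, x̄ ∈ X and x ∈ dom f. Then for every real number λ ≤ f(x̄) − f(x), there exists a point x₀ on the segment [x, x̄) (i.e., x₀ = x + t(x̄ − x) for some t ∈ [0,1)) such that λ ≤ f′(x₀; x̄ − x), where f′ denotes the lower Dini subderivative. -/
open Filter Topology Set

variable {X : Type*} [NormedAddCommGroup X] [NormedSpace ℝ X]

/-- Lower Dini subderivative of `f` at `x` in direction `d`. -/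
noncomputable def diniSub (f : X → EReal) (x d : X) : EReal :=
  Filter.liminf (fun t : ℝ => (f (x + t • d) - f x) / (t : EReal)) (𝓝[>] 0)

/-- Clarke–Rockafellar upper subderivative `f↑(x; d)`. -/
noncomputable def crSub (f : X → EReal) (x d : X) : EReal :=
  ⨆ δ : {δ : ℝ // 0 < δ},
    Filter.limsup
      (fun p : ℝ × X =>
        ⨅ d' : {d' : X // ‖d' - d‖ ≤ δ.1},
          (f (p.2 + p.1 • (d' : X)) - f p.2) / (p.1 : EReal))
      ((𝓝[>] (0:ℝ)) ×ˢ (𝓝 x ⊓ Filter.comap f (𝓝 (f x))))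

/-- Clarke subdifferential. -/
def clarkeSub (f : X → EReal) (x : X) : Set (X →L[ℝ] ℝ) :=
  {xs | ∀ d, ((xs d : ℝ) : EReal) ≤ crSub f x d}

/-- Subdifferential of convex analysis. -/
def cxSub (f : X → EReal) (x : X) : Set (X →L[ℝ] ℝ) :=
  {xs | ∀ y, ((xs (y - x) : ℝ) : EReal) + f x ≤ f y}

/-- Monotone polar of a graph `T ⊆ X × X*`. -/
def MonoPolar (T : Set (X × (X →L[ℝ] ℝ))) : Set (X × (X →L[ℝ] ℝ)) :=
  {p | ∀ q ∈ T, 0 ≤ (q.2 - p.2) (q.1 - p.1)}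

/-- `ε`-enlargement of the Clarke subdifferential. -/
def epsEnl (f : X → EReal) (eps : ℝ) (x : X) : Set (X →L[ℝ] ℝ) :=
  {xs | ∃ xe : X, xs ∈ clarkeSub f xe ∧ ‖xe - x‖ ≤ eps ∧
    f xe - f x ≤ (eps : EReal) ∧ f x - f xe ≤ (eps : EReal) ∧ xs (xe - x) ≤ eps}

/-- A lower semicontinuous `EReal`-valued function attains its minimum on a nonempty
compact set. -/
lemma lsc_exists_min {g : ℝ → EReal} (hg : LowerSemicontinuous g) {s : Set ℝ}
    (hs : IsCompact s) (hne : s.Nonempty) : ∃ t ∈ s, ∀ u ∈ s, g t ≤ g u := by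
  by_cases htop : ∀ u ∈ s, g u = ⊤
  · obtain ⟨t, ht⟩ := hne
    exact ⟨t, ht, fun u hu => (htop u hu) ▸ le_top⟩
  push_neg at htop
  obtain ⟨u₀, hu₀, hu₀'⟩ := htop
  set m := sInf (g '' s) with hm
  have hm_top : m < ⊤ := lt_of_le_of_lt (sInf_le ⟨u₀, hu₀, rfl⟩) hu₀'.lt_top
  haveI : Nonempty {y : EReal // m < y} := ⟨⟨⊤, hm_top⟩⟩
  set T : {y : EReal // m < y} → Set ℝ := fun y => s ∩ g ⁻¹' (Iic y.1) with hT
  have hdir : Directed (· ⊇ ·) T := by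
    intro y z
    refine ⟨⟨min y.1 z.1, lt_min y.2 z.2⟩, ?_, ?_⟩ <;>
      exact inter_subset_inter_right _ (preimage_mono (Iic_subset_Iic.2 (by simp)))
  have hne' : ∀ y, (T y).Nonempty := by
    intro y
    obtain ⟨e, ⟨v, hv, rfl⟩, he⟩ := sInf_lt_iff.1 y.2
    exact ⟨v, hv, le_of_lt he⟩
  have hcl : ∀ y, IsClosed (T y) := fun y =>
    hs.isClosed.inter (hg.isClosed_preimage y.1)
  have hcpt : ∀ y, IsCompact (T y) := fun y =>
    hs.inter_right (hg.isClosed_preimage y.1)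
  obtain ⟨t, ht⟩ :=
    IsCompact.nonempty_iInter_of_directed_nonempty_isCompact_isClosed T hdir hne' hcpt hcl
  simp only [mem_iInter] at ht
  have hts : t ∈ s := (ht ⟨⊤, hm_top⟩).1
  refine ⟨t, hts, fun u hu => ?_⟩
  have h1 : g t ≤ m := le_of_forall_gt_imp_ge_of_dense fun y hy => (ht ⟨y, hy⟩).2
  exact h1.trans (sInf_le ⟨u, hu, rfl⟩)

theorem mean_value_inequality [CompleteSpace X]
    (f : X → EReal) (hlsc : LowerSemicontinuous f)
    (hbot : ∀ z, f z ≠ ⊥) (hproper : ∃ z, f z ≠ ⊤)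
    (xb x : X) (hx : f x ≠ ⊤) (lam : ℝ) (hlam : (lam : EReal) ≤ f xb - f x) :
    ∃ t ∈ Set.Ico (0:ℝ) 1,
      (lam : EReal) ≤ diniSub f (x + t • (xb - x)) (xb - x) := by
  set d := xb - x with hd
  set a : ℝ := (f x).toReal with ha
  have hfx : f x = (a : EReal) := (EReal.coe_toReal hx (hbot x)).symm
  -- the auxiliary function
  set g : ℝ → EReal := fun t => f (x + t • d) + ((-(lam * t) : ℝ) : EReal) with hg
  have hg_lsc : LowerSemicontinuous g := by
    have h1 : LowerSemicontinuous fun t : ℝ => f (x + t • d) :=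
      hlsc.comp (continuous_const.add (continuous_id.smul continuous_const))
    have h2 : Continuous fun t : ℝ => ((-(lam * t) : ℝ) : EReal) :=
      continuous_coe_real_ereal.comp ((continuous_const.mul continuous_id).neg)
    exact h1.add' h2.lowerSemicontinuous fun z =>
      EReal.continuousAt_add (Or.inr (EReal.coe_ne_bot _)) (Or.inr (EReal.coe_ne_top _))
  have hg0 : g 0 = f x := by simp [hg]
  have hg1 : g 1 = f xb + ((-lam : ℝ) : EReal) := by
    simp only [hg, one_smul, hd]
    norm_num [add_sub_cancel]
  -- g 0 ≤ g 1
  have hkey : (lam : EReal) + (a : EReal) ≤ f xb := by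
    rw [← EReal.le_sub_iff_add_le (Or.inl (EReal.coe_ne_bot _)) (Or.inl (EReal.coe_ne_top _))]
    rw [← hfx]; exact hlam
  have hg01 : g 0 ≤ g 1 := by
    rw [hg0, hg1, hfx]
    have : (a : EReal) ≤ f xb - (lam : EReal) := by
      rw [EReal.le_sub_iff_add_le (Or.inl (EReal.coe_ne_bot _)) (Or.inl (EReal.coe_ne_top _))]
      rw [add_comm]; exact hkey
    rwa [sub_eq_add_neg, ← EReal.coe_neg] at this
  -- minimizer on [0,1]
  obtain ⟨t₁, ht₁, hmin₁⟩ := lsc_exists_min hg_lsc isCompact_Icc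
    (nonempty_Icc.2 (by norm_num : (0:ℝ) ≤ 1))
  -- choose a minimizer in [0,1)
  obtain ⟨t₀, ht₀, hmin⟩ : ∃ t₀ ∈ Set.Ico (0:ℝ) 1, ∀ u ∈ Icc (0:ℝ) 1, g t₀ ≤ g u := by
    rcases lt_or_eq_of_le ht₁.2 with h | h
    · exact ⟨t₁, ⟨ht₁.1, h⟩, hmin₁⟩
    · exact ⟨0, ⟨le_refl _, by norm_num⟩, fun u hu =>
        hg01.trans (h ▸ hmin₁ u hu)⟩
  refine ⟨t₀, ht₀, ?_⟩
  set x₀ := x + t₀ • d with hx₀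
  -- f x₀ is finite
  have hgt₀ : g t₀ ≠ ⊤ := by
    intro h
    have := hmin 0 ⟨le_refl _, by norm_num⟩
    rw [h, hg0, hfx] at this
    exact (EReal.coe_ne_top a) (top_le_iff.1 this)
  have hfx₀_top : f x₀ ≠ ⊤ := by
    intro h
    apply hgt₀
    simp only [hg, ← hx₀, h, EReal.top_add_of_ne_bot (EReal.coe_ne_bot _)]
  set b : ℝ := (f x₀).toReal with hb
  have hfx₀ : f x₀ = (b : EReal) := (EReal.coe_toReal hfx₀_top (hbot x₀)).symm
  -- the eventual inequality
  have hev : ∀ᶠ t : ℝ in 𝓝[>] 0,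
      (lam : EReal) ≤ (f (x₀ + t • d) - f x₀) / (t : EReal) := by
    have hmem : Ioo (0:ℝ) (1 - t₀) ∈ 𝓝[>] (0:ℝ) :=
      Ioo_mem_nhdsGT_of_mem ⟨le_refl _, by linarith [ht₀.2]⟩
    filter_upwards [hmem] with t ht
    have htpos : (0:ℝ) < t := ht.1
    have hmem' : t₀ + t ∈ Icc (0:ℝ) 1 := ⟨by linarith [ht₀.1], by linarith [ht.2]⟩
    have hpt : x + (t₀ + t) • d = x₀ + t • d := by
      rw [add_smul, hx₀, add_assoc]
    have hle : g t₀ ≤ g (t₀ + t) := hmin _ hmem'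
    rw [hg] at hle
    simp only [hpt, ← hx₀, hfx₀] at hle
    -- hle : (b:EReal) + ↑(-(lam*t₀)) ≤ f (x₀ + t • d) + ↑(-(lam*(t₀+t)))
    have hle2 : ((b + -(lam * t₀) : ℝ) : EReal) ≤
        f (x₀ + t • d) + ((-(lam * (t₀ + t)) : ℝ) : EReal) := by
      rw [EReal.coe_add]; exact hle
    have hle3 : ((lam * t + b : ℝ) : EReal) ≤ f (x₀ + t • d) := by
      have := (EReal.sub_le_iff_le_add
        (b := ((-(lam * (t₀ + t)) : ℝ) : EReal))
        (Or.inl (EReal.coe_ne_bot _)) (Or.inl (EReal.coe_ne_top _))).2 hle2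
      rw [← EReal.coe_sub] at this
      convert this using 2
      ring
    rw [EReal.le_div_iff_mul_le (by exact_mod_cast htpos) (EReal.coe_ne_top t),
      ← EReal.coe_mul,
      EReal.le_sub_iff_add_le (Or.inl (hfx₀ ▸ EReal.coe_ne_bot b))
        (Or.inl (hfx₀ ▸ EReal.coe_ne_top b)), hfx₀, ← EReal.coe_add]
    exact hle3
  rw [diniSub]
  exact le_liminf_of_le (by isBoundedDefault) hev
end

section
/- Let X be a real Banach space, f : X → ℝ ∪ {+∞} proper lower semicontinuous, C ⊆ X convex, and x̄ ∈ C. Then the following are equivalent: (a) f′(y; x̄ − y) ≤ 0 for every y ∈ C; (b) f(y + t(x̄ − y)) ≤ f(y) for every y ∈ C and every t ∈ [0,1]. -/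
open Filter Topology Set

variable {X : Type*} [NormedAddCommGroup X] [NormedSpace ℝ X]

lemma ereal_add_real_le_real {a : EReal} {b c : ℝ} :
    a + (b : EReal) ≤ (c : EReal) ↔ a ≤ ((c - b : ℝ) : EReal) := by
  induction a using EReal.rec with
  | bot => simp
  | coe x =>
      rw [← EReal.coe_add, EReal.coe_le_coe_iff, EReal.coe_le_coe_iff]
      constructor <;> intro <;> linarith
  | top => simp [EReal.top_add_coe, ← EReal.coe_sub]

lemma ereal_sub_nonpos {a b : EReal} (h : a ≤ b) : a - b ≤ 0 := by
  induction b using EReal.rec with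
  | bot => simp_all
  | coe x =>
      rw [EReal.sub_le_iff_le_add (by simp) (by simp), zero_add]; exact h
  | top =>
      induction a using EReal.rec with
      | bot => simp
      | coe y => simp [sub_eq_add_neg]
      | top => simp [sub_eq_add_neg]

theorem minty_dini_iff_increasing [CompleteSpace X]
    (f : X → EReal) (hlsc : LowerSemicontinuous f)
    (hbot : ∀ z, f z ≠ ⊥) (hproper : ∃ z, f z ≠ ⊤)
    (C : Set X) (hC : Convex ℝ C) (xb : X) (hxb : xb ∈ C) :
    (∀ y ∈ C, diniSub f y (xb - y) ≤ 0) ↔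
      (∀ y ∈ C, ∀ t ∈ Set.Icc (0:ℝ) 1, f (y + t • (xb - y)) ≤ f y) := by
  constructor
  · -- hard direction
    intro h y hy t ht
    by_cases htop : f y = ⊤
    · simp [htop]
    set r : ℝ := (f y).toReal with hrdef
    have hr : f y = (r : EReal) := (EReal.coe_toReal htop (hbot y)).symm
    set d := xb - y with hd
    set g : ℝ → EReal := fun s => f (y + s • d) with hgdef
    have hg : LowerSemicontinuous g :=
      hlsc.comp (continuous_const.add (continuous_id.smul continuous_const))
    suffices H : ∀ ε : ℝ, 0 < ε → g t ≤ ((r + ε : ℝ) : EReal) by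
      show g t ≤ f y
      rw [hr]
      by_cases hgt : g t = ⊤
      · have := H 1 one_pos
        rw [hgt] at this
        exact absurd (top_le_iff.1 this) (EReal.coe_ne_top _)
      · have hne : g t ≠ ⊥ := hbot _
        have hq : g t = (((g t).toReal : ℝ) : EReal) := (EReal.coe_toReal hgt hne).symm
        set q : ℝ := (g t).toReal
        rw [hq, EReal.coe_le_coe_iff]
        by_contra hqr
        push_neg at hqr
        have := H ((q - r)/2) (by linarith)
        rw [hq, EReal.coe_le_coe_iff] at this
        linarith
    intro ε hε
    set F : ℝ → EReal := fun s => g s + ((-(ε * s) : ℝ) : EReal) with hFdef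
    have hF : LowerSemicontinuous F := by
      apply hg.add' ((continuous_coe_real_ereal.comp
        ((continuous_const.mul continuous_id).neg)).lowerSemicontinuous)
      intro s
      exact EReal.continuousAt_add (Or.inr (EReal.coe_ne_bot _)) (Or.inl (hbot _))
    have hmemA : ∀ s : ℝ, (F s ≤ (r : EReal) ↔ g s ≤ ((r + ε * s : ℝ) : EReal)) := by
      intro s
      rw [ereal_add_real_le_real]
      have : (r - -(ε * s)) = r + ε * s := by ring
      rw [this]
    set A : Set ℝ := Icc 0 t ∩ F ⁻¹' Iic (r : EReal) with hA
    have hAclosed : IsClosed A := isClosed_Icc.inter (hF.isClosed_preimage _)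
    have h0A : (0 : ℝ) ∈ A := by
      refine ⟨⟨le_refl 0, ht.1⟩, ?_⟩
      show F 0 ≤ (r : EReal)
      rw [hmemA]
      have : g 0 = f y := by simp [hgdef]
      rw [this, hr]
      norm_num
    have hbdd : BddAbove A := bddAbove_Icc.mono inter_subset_left
    set T := sSup A with hT
    have hTA : T ∈ A := hAclosed.csSup_mem ⟨0, h0A⟩ hbdd
    have hT0 : 0 ≤ T := le_csSup hbdd h0A
    have hTt : T ≤ t := hTA.1.2
    have hgT : g T ≤ ((r + ε * T : ℝ) : EReal) := (hmemA T).1 hTA.2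
    rcases eq_or_lt_of_le hTt with hTeq | hTlt
    · -- T = t : done
      calc g t = g T := by rw [hTeq]
        _ ≤ ((r + ε * T : ℝ) : EReal) := hgT
        _ ≤ ((r + ε : ℝ) : EReal) := by
            rw [EReal.coe_le_coe_iff]
            nlinarith [ht.2, hT0]
    · exfalso
      -- z_T ∈ C
      have hT1 : T < 1 := lt_of_lt_of_le hTlt ht.2
      have hzC : y + T • d ∈ C := by
        have := hC hy hxb (by linarith : (0:ℝ) ≤ 1 - T) hT0 (by ring)
        convert this using 1
        rw [hd]
        module
      have hdini := h _ hzC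
      have hdir : xb - (y + T • d) = (1 - T) • d := by
        rw [hd]; module
      rw [hdir] at hdini
      -- get frequently small s with small quotient
      have hlt : diniSub f (y + T • d) ((1 - T) • d) < ((ε * (1 - T) : ℝ) : EReal) :=
        lt_of_le_of_lt hdini (by exact_mod_cast mul_pos hε (by linarith))
      rw [diniSub] at hlt
      have hfreq := Filter.frequently_lt_of_liminf_lt (by isBoundedDefault) hlt
      have hev : ∀ᶠ s : ℝ in 𝓝[>] 0, 0 < s ∧ s < (t - T) / (1 - T) := by
        filter_upwards [Ioo_mem_nhdsGT_of_mem
          ⟨le_refl 0, div_pos (show (0:ℝ) < t - T by linarith)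
            (show (0:ℝ) < 1 - T by linarith)⟩] with s hs
        exact ⟨hs.1, hs.2⟩
      obtain ⟨s, hq, hs0, hst⟩ := (hfreq.and_eventually hev).exists
      -- the new parameter
      set u := T + s * (1 - T) with hu
      have hgTreal : g T ≠ ⊤ := fun hh => by
        rw [hh] at hgT
        exact absurd (top_le_iff.1 hgT) (EReal.coe_ne_top _)
      set ρ : ℝ := (g T).toReal with hρ
      have hgTρ : g T = (ρ : EReal) := (EReal.coe_toReal hgTreal (hbot _)).symm
      have harg : (y + T • d) + s • ((1 - T) • d) = y + u • d := by
        rw [hu]; module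
      rw [harg] at hq
      rw [show f (y + T • d) = (ρ : EReal) from hgTρ] at hq
      -- from division inequality
      have hq2 : g u - (ρ : EReal) < ((ε * (1 - T) * s : ℝ) : EReal) := by
        by_contra hcon
        push_neg at hcon
        have h2 : ((ε * (1 - T) : ℝ) : EReal) ≤ (g u - (ρ : EReal)) / (s : EReal) :=
          (EReal.le_div_iff_mul_le (by exact_mod_cast hs0) (by simp)).2
            (by rw [← EReal.coe_mul]; exact hcon)
        exact absurd hq (not_lt.2 h2)
      have hq3 : g u < ((ε * (1 - T) * s + ρ : ℝ) : EReal) := by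
        have h3 := (EReal.sub_lt_iff (Or.inl (by simp)) (Or.inl (by simp))).1 hq2
        rw [EReal.coe_add]
        exact h3
      have hρr : ρ ≤ r + ε * T := by
        rw [hgTρ, EReal.coe_le_coe_iff] at hgT; exact hgT
      have huA : u ∈ A := by
        have hu0 : 0 ≤ u := by
          have := mul_pos hs0 (by linarith : (0:ℝ) < 1 - T)
          rw [hu]; linarith
        have hut : u ≤ t := by
          have h1T : (0:ℝ) < 1 - T := by linarith
          have := (lt_div_iff₀ h1T).1 hst
          rw [hu]; linarith
        refine ⟨⟨hu0, hut⟩, ?_⟩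
        show F u ≤ (r : EReal)
        rw [hmemA]
        apply le_trans hq3.le
        rw [EReal.coe_le_coe_iff]
        rw [hu]; nlinarith
      have : u ≤ T := le_csSup hbdd huA
      have hTu : T < u := by
        have := mul_pos hs0 (by linarith : (0:ℝ) < 1 - T)
        rw [hu]; linarith
      linarith
  · -- easy direction
    intro h y hy
    rw [diniSub]
    apply Filter.liminf_le_of_frequently_le'
    have hev : ∀ᶠ s : ℝ in 𝓝[>] 0,
        (f (y + s • (xb - y)) - f y) / (s : EReal) ≤ 0 := by
      filter_upwards [Ioo_mem_nhdsGT_of_mem (by norm_num : (0:ℝ) ∈ Ico 0 1)] with s hs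
      apply EReal.div_nonpos_of_nonpos_of_nonneg
      · exact ereal_sub_nonpos (h y hy s ⟨hs.1.le, hs.2.le⟩)
      · exact_mod_cast hs.1.le
    exact hev.frequently
end

section
/- Let X be a real Banach space, f : X → ℝ ∪ {+∞} proper lower semicontinuous, U ⊆ X open convex, x̄ ∈ U, and y ∈ U. If f(y′ + t(x̄ − y′)) ≤ f(y′) for every y′ ∈ U and t ∈ [0,1], then the Clarke–Rockafellar upper subderivative satisfies f↑(y; x̄ − y) ≤ 0. -/
open Filter Topology Set

variable {X : Type*} [NormedAddCommGroup X] [NormedSpace ℝ X]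

theorem increasing_imp_crSub_nonpos [CompleteSpace X]
    (f : X → EReal) (hlsc : LowerSemicontinuous f)
    (hbot : ∀ z, f z ≠ ⊥) (hproper : ∃ z, f z ≠ ⊤)
    (U : Set X) (hUo : IsOpen U) (hUc : Convex ℝ U)
    (xb : X) (hxb : xb ∈ U) (y : X) (hy : y ∈ U)
    (h : ∀ y' ∈ U, ∀ t ∈ Set.Icc (0:ℝ) 1, f (y' + t • (xb - y')) ≤ f y') :
    crSub f y (xb - y) ≤ 0 := by
  rw [crSub]
  apply iSup_le
  rintro ⟨δ, hδ⟩
  apply Filter.limsup_le_of_le (by isBoundedDefault)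
  have h1 : ∀ᶠ t : ℝ in 𝓝[>] 0, t ∈ Set.Ioc (0:ℝ) 1 :=
    Ioc_mem_nhdsGT one_pos
  have h2 : ∀ᶠ x in 𝓝 y ⊓ Filter.comap f (𝓝 (f y)), x ∈ U ∧ ‖x - y‖ ≤ δ := by
    apply Filter.Eventually.filter_mono inf_le_left
    have hU : ∀ᶠ x in 𝓝 y, x ∈ U := hUo.mem_nhds hy
    have hB : ∀ᶠ x in 𝓝 y, ‖x - y‖ ≤ δ := by
      have := Metric.closedBall_mem_nhds y hδ
      filter_upwards [this] with x hx
      simpa [Metric.mem_closedBall, dist_eq_norm] using hx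
    exact hU.and hB
  filter_upwards [h1.prod_mk h2] with p hp
  obtain ⟨⟨ht0, ht1⟩, hxU, hxδ⟩ := hp
  have hnorm : ‖(xb - p.2) - (xb - y)‖ ≤ δ := by
    have : (xb - p.2) - (xb - y) = -(p.2 - y) := by abel
    rw [this, norm_neg]; exact hxδ
  refine le_trans (iInf_le _ ⟨xb - p.2, hnorm⟩) ?_
  have hnum : f (p.2 + p.1 • (xb - p.2)) - f p.2 ≤ 0 := by
    apply EReal.sub_le_of_le_add'
    rw [add_zero]
    exact h p.2 hxU p.1 ⟨le_of_lt ht0, ht1⟩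
  exact EReal.div_nonpos_of_nonpos_of_nonneg hnum
    (by exact_mod_cast le_of_lt ht0)
end

section
/- Let X be a real Banach space, f : X → ℝ ∪ {+∞} proper lower semicontinuous, U ⊆ X open convex, and x̄ ∈ U. If f(y + t(x̄ − y)) ≤ f(y) for every y ∈ U and t ∈ [0,1], then for every y ∈ U and every x* in the Clarke subdifferential ∂_C f(y), one has ⟨x*, x̄ − y⟩ ≤ 0. -/
open Filter Topology Set

variable {X : Type*} [NormedAddCommGroup X] [NormedSpace ℝ X]

theorem increasing_imp_clarke_minty [CompleteSpace X]
    (f : X → EReal) (hlsc : LowerSemicontinuous f)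
    (hbot : ∀ z, f z ≠ ⊥) (hproper : ∃ z, f z ≠ ⊤)
    (U : Set X) (hUo : IsOpen U) (hUc : Convex ℝ U)
    (xb : X) (hxb : xb ∈ U)
    (h : ∀ y ∈ U, ∀ t ∈ Set.Icc (0:ℝ) 1, f (y + t • (xb - y)) ≤ f y) :
    ∀ y ∈ U, ∀ xs ∈ clarkeSub f y, xs (xb - y) ≤ 0 := by
  intro y hy xs hxs
  have key : ((xs (xb - y) : ℝ) : EReal) ≤ crSub f y (xb - y) := hxs (xb - y)
  have hcr : crSub f y (xb - y) ≤ 0 := by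
    apply iSup_le
    rintro ⟨δ, hδ⟩
    refine Filter.limsup_le_of_le (by isBoundedDefault) ?_
    have h1 : ∀ᶠ t : ℝ in 𝓝[>] 0, t ∈ Set.Ioo (0:ℝ) 1 := by
      filter_upwards [self_mem_nhdsWithin,
        eventually_nhdsWithin_of_eventually_nhds (eventually_lt_nhds one_pos)] with t ht ht1
      exact ⟨ht, ht1⟩
    have h2 : ∀ᶠ x : X in 𝓝 y ⊓ Filter.comap f (𝓝 (f y)),
        x ∈ U ∧ ‖x - y‖ ≤ δ := by
      apply Filter.Eventually.filter_mono inf_le_left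
      have : U ∩ Metric.ball y δ ∈ 𝓝 y :=
        (hUo.inter Metric.isOpen_ball).mem_nhds ⟨hy, by simpa using hδ⟩
      filter_upwards [this] with x hx
      exact ⟨hx.1, le_of_lt (by simpa [dist_eq_norm] using hx.2)⟩
    filter_upwards [h1.prod_inl (𝓝 y ⊓ Filter.comap f (𝓝 (f y))),
      h2.prod_inr (𝓝[>] (0:ℝ))] with p hp1 hp2
    obtain ⟨t, x⟩ := p
    simp only at hp1 hp2 ⊢
    have hd' : ‖(xb - x) - (xb - y)‖ ≤ δ := by
      have : (xb - x) - (xb - y) = -(x - y) := by abel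
      rw [this, norm_neg]; exact hp2.2
    refine le_trans (iInf_le _ ⟨xb - x, hd'⟩) ?_
    apply EReal.div_nonpos_of_nonpos_of_nonneg
    · have hle : f (x + t • (xb - x)) ≤ f x :=
        h x hp2.1 t ⟨le_of_lt hp1.1, le_of_lt hp1.2⟩
      exact EReal.sub_le_of_le_add' (by rwa [add_zero])
    · exact_mod_cast le_of_lt hp1.1
  have := key.trans hcr
  exact_mod_cast this
end

section
/- Let X be a real Banach space and f : X → ℝ ∪ {+∞} a proper lower semicontinuous convex function. Then for every x̄ ∈ dom f, the Clarke subdifferential coincides with the convex subdifferential: ∂_C f(x̄) = ∂_cx f(x̄). -/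
open Filter Topology Set

variable {X : Type*} [NormedAddCommGroup X] [NormedSpace ℝ X]

private lemma exists_real_eq (a : EReal) (h1 : a ≠ ⊥) (h2 : a ≠ ⊤) :
    ∃ r : ℝ, a = (r : EReal) := by
  induction a using EReal.rec with
  | bot => simp at h1
  | coe r => exact ⟨r, rfl⟩
  | top => simp at h2

private lemma coe_le_of_forall_sub {b : EReal} {c : ℝ}
    (h : ∀ ε : ℝ, 0 < ε → ((c - ε : ℝ) : EReal) ≤ b) : (c : EReal) ≤ b := by
  induction b using EReal.rec with
  | bot =>
    have := h 1 one_pos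
    rw [le_bot_iff] at this
    exact absurd this (EReal.coe_ne_bot _)
  | coe r =>
    refine EReal.coe_le_coe_iff.mpr ?_
    by_contra hcr
    push_neg at hcr
    have := EReal.coe_le_coe_iff.mp (h ((c - r) / 2) (by linarith))
    linarith
  | top => exact le_top

private lemma le_coe_of_forall_add {a : EReal} {c : ℝ}
    (h : ∀ ε : ℝ, 0 < ε → a ≤ ((c + ε : ℝ) : EReal)) : a ≤ (c : EReal) := by
  induction a using EReal.rec with
  | bot => exact bot_le
  | coe r =>
    refine EReal.coe_le_coe_iff.mpr ?_
    by_contra hcr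
    push_neg at hcr
    have := EReal.coe_le_coe_iff.mp (h ((r - c) / 2) (by linarith))
    linarith
  | top =>
    have := h 1 one_pos
    rw [top_le_iff] at this
    exact absurd this (EReal.coe_ne_top _)

private lemma div_lower (v : EReal) (r c t : ℝ) (ht : 0 < t)
    (h : ((t * c + r : ℝ) : EReal) ≤ v) :
    ((c : ℝ) : EReal) ≤ (v - (r : EReal)) / (t : EReal) := by
  rw [EReal.le_div_iff_mul_le (by exact_mod_cast ht) (by simp),
    EReal.le_sub_iff_add_le (.inl (EReal.coe_ne_bot r)) (.inl (EReal.coe_ne_top r))]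
  calc ((c : ℝ) : EReal) * (t : ℝ) + (r : ℝ) = ((t * c + r : ℝ) : EReal) := by
        rw [← EReal.coe_mul, ← EReal.coe_add, mul_comm]
    _ ≤ v := h

private lemma div_upper (w : EReal) (r s t : ℝ) (ht : 0 < t)
    (h : w ≤ ((t * s + r : ℝ) : EReal)) :
    (w - (r : EReal)) / (t : EReal) ≤ (s : EReal) := by
  rw [EReal.div_le_iff_le_mul (by exact_mod_cast ht) (by simp),
    EReal.sub_le_iff_le_add (.inl (EReal.coe_ne_bot r)) (.inl (EReal.coe_ne_top r))]
  calc w ≤ ((t * s + r : ℝ) : EReal) := h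
    _ = (t : ℝ) * (s : ℝ) + (r : ℝ) := by rw [← EReal.coe_mul, ← EReal.coe_add]

theorem clarkeSub_eq_cxSub_of_convex [CompleteSpace X]
    (f : X → EReal) (hlsc : LowerSemicontinuous f)
    (hbot : ∀ z, f z ≠ ⊥) (hproper : ∃ z, f z ≠ ⊤)
    (hconv : ∀ x y : X, ∀ a b : ℝ, 0 ≤ a → 0 ≤ b → a + b = 1 →
      f (a • x + b • y) ≤ (a : EReal) * f x + (b : EReal) * f y)
    (xb : X) (hxb : f xb ≠ ⊤) :
    clarkeSub f xb = cxSub f xb := by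
  obtain ⟨fxb, hfxb⟩ := exists_real_eq (f xb) (hbot xb) hxb
  ext xs
  simp only [clarkeSub, cxSub, Set.mem_setOf_eq]
  constructor
  · -- Clarke ⊆ convex
    intro hxs y
    set d := y - xb with hd
    rcases eq_or_ne (f y) ⊤ with hfy | hfy
    · rw [hfy]; exact le_top
    obtain ⟨fy, hfy'⟩ := exists_real_eq (f y) (hbot y) hfy
    have key : crSub f xb d ≤ ((fy - fxb : ℝ) : EReal) := by
      refine iSup_le ?_
      rintro ⟨δ, hδ⟩
      refine le_coe_of_forall_add fun ε hε => ?_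
      refine limsup_le_of_le (by isBoundedDefault) ?_
      have hA : ∀ᶠ t : ℝ in 𝓝[>] (0:ℝ), t ∈ Ioo (0:ℝ) 1 :=
        Ioo_mem_nhdsGT_of_mem ⟨le_refl 0, one_pos⟩
      have hB1 : ∀ᶠ x : X in 𝓝 xb, ‖x - xb‖ ≤ δ := by
        filter_upwards [Metric.closedBall_mem_nhds xb hδ] with x hx
        simpa [dist_eq_norm] using hx
      have hmem : Ioo ((fxb - ε : ℝ) : EReal) ((fxb + 1 : ℝ) : EReal) ∈ 𝓝 (f xb) := by
        rw [hfxb]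
        exact Ioo_mem_nhds (by exact_mod_cast sub_lt_self fxb hε)
          (by exact_mod_cast lt_add_of_pos_right fxb one_pos)
      have hB2 : ∀ᶠ x : X in Filter.comap f (𝓝 (f xb)),
          f x ∈ Ioo ((fxb - ε : ℝ) : EReal) ((fxb + 1 : ℝ) : EReal) :=
        Filter.preimage_mem_comap hmem
      have hB : ∀ᶠ x : X in 𝓝 xb ⊓ Filter.comap f (𝓝 (f xb)),
          ‖x - xb‖ ≤ δ ∧ f x ∈ Ioo ((fxb - ε : ℝ) : EReal) ((fxb + 1 : ℝ) : EReal) :=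
        (hB1.filter_mono inf_le_left).and (hB2.filter_mono inf_le_right)
      filter_upwards [hA.prod_inl (𝓝 xb ⊓ Filter.comap f (𝓝 (f xb))),
        hB.prod_inr (𝓝[>] (0:ℝ))] with p hp1 hp2
      obtain ⟨t, x⟩ := p
      obtain ⟨hxδ, ⟨hxlo, hxhi⟩⟩ := hp2
      obtain ⟨r, hr⟩ := exists_real_eq (f x) (hbot x) (ne_top_of_lt hxhi)
      have hrlo : fxb - ε < r := by
        rw [hr] at hxlo; exact_mod_cast hxlo
      have hmemd : ‖(y - x) - d‖ ≤ δ := by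
        have h9 : (y - x) - d = xb - x := by rw [hd]; abel
        rw [h9, norm_sub_rev]; exact hxδ
      refine le_trans (iInf_le _ ⟨y - x, hmemd⟩) ?_
      have heq : x + t • (y - x) = (1 - t) • x + t • y := by module
      have hfc : f (x + t • (y - x)) ≤ ((t * (fy - r) + r : ℝ) : EReal) := by
        rw [heq]
        refine le_trans (hconv x y (1 - t) t (by linarith [hp1.2]) hp1.1.le (by ring)) ?_
        rw [hr, hfy', ← EReal.coe_mul, ← EReal.coe_mul, ← EReal.coe_add]
        exact_mod_cast le_of_eq (by ring)
      rw [hr]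
      refine le_trans (div_upper _ r (fy - r) t hp1.1 hfc) ?_
      exact EReal.coe_le_coe_iff.mpr (by linarith)
    have h1 : (xs d : ℝ) ≤ fy - fxb := EReal.coe_le_coe_iff.mp ((hxs d).trans key)
    rw [hfxb, hfy', ← EReal.coe_add, EReal.coe_le_coe_iff]
    linarith
  · -- convex ⊆ Clarke
    intro hxs d
    set c := xs d with hc
    set M := ‖xs‖ + 1 with hM
    have hMpos : 0 < M := by positivity
    refine le_iSup_iff.mpr fun b hb => ?_
    refine coe_le_of_forall_sub fun ε hε => ?_
    have hδ : 0 < ε / M := div_pos hε hMpos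
    refine le_trans ?_ (hb ⟨ε / M, hδ⟩)
    have hpure : (𝓝[>] (0:ℝ)) ×ˢ (pure xb : Filter X) ≤
        (𝓝[>] (0:ℝ)) ×ˢ (𝓝 xb ⊓ Filter.comap f (𝓝 (f xb))) := by
      refine Filter.prod_mono le_rfl (le_inf (pure_le_nhds xb) ?_)
      rw [← Filter.map_le_iff_le_comap, Filter.map_pure]
      exact pure_le_nhds _
    refine le_trans ?_ (limsup_le_limsup_of_le hpure)
    haveI : ((𝓝[>] (0:ℝ)) ×ˢ (pure xb : Filter X)).NeBot :=
      Filter.prod_neBot.mpr ⟨inferInstance, inferInstance⟩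
    refine le_trans (le_liminf_of_le (by isBoundedDefault) ?_) liminf_le_limsup
    have hA : ∀ᶠ t : ℝ in 𝓝[>] (0:ℝ), t ∈ Ioi (0:ℝ) := eventually_mem_nhdsWithin
    have hB : ∀ᶠ x : X in (pure xb : Filter X), x = xb := eventually_pure.mpr rfl
    filter_upwards [hA.prod_inl (pure xb : Filter X), hB.prod_inr (𝓝[>] (0:ℝ))] with p hp1 hp2
    obtain ⟨t, x⟩ := p
    simp only at hp1 hp2
    have ht : (0:ℝ) < t := hp1
    rw [hp2]
    refine le_iInf fun d' => ?_
    have hsub := hxs (xb + t • (d' : X))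
    rw [add_sub_cancel_left, xs.map_smul, smul_eq_mul, hfxb, ← EReal.coe_add] at hsub
    have hd' : c - ε ≤ xs (d' : X) := by
      have h2 : |xs ((d' : X) - d)| ≤ ‖xs‖ * ‖(d' : X) - d‖ := xs.le_opNorm _
      have h3 : ‖xs‖ * ‖(d' : X) - d‖ ≤ M * (ε / M) :=
        mul_le_mul (by rw [hM]; linarith) d'.2 (norm_nonneg _) hMpos.le
      have h4 : M * (ε / M) = ε := by field_simp
      have h5 : -ε ≤ xs ((d' : X) - d) := by
        have := (abs_le.mp (h2.trans (h3.trans_eq h4))).1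
        linarith
      rw [map_sub] at h5
      rw [hc]
      linarith
    rw [hfxb]
    refine div_lower _ fxb (c - ε) t ht ?_
    refine le_trans (EReal.coe_le_coe_iff.mpr ?_) hsub
    nlinarith [hd']
end

section
/- Let X be a real Banach space and f : X → ℝ ∪ {+∞} proper lower semicontinuous convex. Then the monotone polar of the convex subdifferential ∂_cx f satisfies: for every x ∈ X, (∂_cx f)⁰(x) ⊇ {x* ∈ X* : (f − x*)(y + t(x − y)) ≤ (f − x*)(y) for all y ∈ X and t ∈ [0,1]}, where (f − x*)(z) := f(z) − ⟨x*, z⟩. -/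
open Filter Topology Set

variable {X : Type*} [NormedAddCommGroup X] [NormedSpace ℝ X]

theorem increasing_subset_polar_cxSub [CompleteSpace X]
    (f : X → EReal) (hlsc : LowerSemicontinuous f)
    (hbot : ∀ z, f z ≠ ⊥) (hproper : ∃ z, f z ≠ ⊤)
    (hconv : ∀ x y : X, ∀ a b : ℝ, 0 ≤ a → 0 ≤ b → a + b = 1 →
      f (a • x + b • y) ≤ (a : EReal) * f x + (b : EReal) * f y)
    (x : X) :
    {xs : X →L[ℝ] ℝ | ∀ y : X, ∀ t ∈ Set.Icc (0:ℝ) 1,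
        f (y + t • (x - y)) - ((xs (y + t • (x - y)) : ℝ) : EReal) ≤
          f y - ((xs y : ℝ) : EReal)} ⊆
      {xs : X →L[ℝ] ℝ | (x, xs) ∈ MonoPolar {p | p.2 ∈ cxSub f p.1}} := by
  intro xs hxs
  rintro ⟨y, ys⟩ hy
  simp only [Set.mem_setOf_eq] at hy hxs ⊢
  -- f y is finite
  have hytop : f y ≠ ⊤ := by
    intro h
    obtain ⟨z, hz⟩ := hproper
    have h2 := hy z
    rw [h] at h2
    rw [EReal.add_top_of_ne_bot (EReal.coe_ne_bot _)] at h2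
    exact hz (top_le_iff.mp h2)
  have hyr : f y = ((f y).toReal : EReal) := (EReal.coe_toReal hytop (hbot y)).symm
  set r := (f y).toReal with hr
  -- use t = 1 in hxs
  have h1 : y + (1:ℝ) • (x - y) = x := by rw [one_smul]; abel
  have hx1 := hxs y 1 ⟨zero_le_one, le_refl 1⟩
  rw [h1] at hx1
  -- f x is finite
  have hxtop : f x ≠ ⊤ := by
    intro h
    rw [h, EReal.top_sub_coe, hyr, ← EReal.coe_sub] at hx1
    exact (EReal.coe_lt_top _).not_ge hx1
  have hxr : f x = ((f x).toReal : EReal) := (EReal.coe_toReal hxtop (hbot x)).symm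
  set s := (f x).toReal with hs
  rw [hxr, hyr, ← EReal.coe_sub, ← EReal.coe_sub, EReal.coe_le_coe_iff] at hx1
  have h2 := hy x
  rw [hxr, hyr, ← EReal.coe_add, EReal.coe_le_coe_iff] at h2
  have e1 : xs (x - y) = xs x - xs y := map_sub xs x y
  have e2 : ys (x - y) = ys x - ys y := map_sub ys x y
  simp only [ContinuousLinearMap.sub_apply, map_sub]
  linarith
end

section
/- Let X be a real Banach space and f : X → ℝ ∪ {+∞} proper lower semicontinuous convex. Then for every x ∈ X, (∂_cx f)⁰(x) = {x* ∈ X* : the function y ↦ f(y) − ⟨x*, y⟩ satisfies (f − x*)(y + t(x − y)) ≤ (f − x*)(y) for all y ∈ X, t ∈ [0,1]}. -/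
open Filter Topology Set

variable {X : Type*} [NormedAddCommGroup X] [NormedSpace ℝ X]

/-! ### Auxiliary lemmas -/

lemma ereal_le_of_forall_add {a b : EReal} (h : ∀ δ : ℝ, 0 < δ → a ≤ b + (δ : EReal)) :
    a ≤ b := by
  cases b with
  | bot =>
    have := h 1 one_pos
    simpa using this
  | top => exact le_top
  | coe r =>
    cases a with
    | bot => exact bot_le
    | top =>
      exfalso
      have h1 := h 1 one_pos
      have h2 : (r:EReal) + ((1:ℝ):EReal) = ((r + 1 : ℝ):EReal) := by norm_cast
      rw [h2, top_le_iff] at h1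
      exact EReal.coe_ne_top _ h1
    | coe s =>
      norm_cast
      by_contra hlt
      push_neg at hlt
      have h2 := h ((s - r)/2) (by linarith)
      rw [← EReal.coe_add] at h2
      norm_cast at h2
      linarith

/-- Lower semicontinuity of the sum of a nowhere-`⊥` lsc `EReal` function and a
continuous real function. -/
lemma lsc_add_cont {f : X → EReal} (hf : LowerSemicontinuous f) (hb : ∀ u, f u ≠ ⊥)
    {g : X → ℝ} (hg : Continuous g) :
    LowerSemicontinuous fun u => f u + (g u : EReal) := by
  intro x y hy
  cases y with
  | bot =>
    refine Eventually.of_forall fun u => ?_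
    show ⊥ < f u + (g u : EReal)
    rw [bot_lt_iff_ne_bot]
    simp [EReal.add_eq_bot_iff, hb u]
  | top => exact absurd hy (by simp)
  | coe y =>
    replace hy : (y:EReal) < f x + ((g x : ℝ):EReal) := hy
    have hr : ∃ r : ℝ, y - g x < r ∧ (r:EReal) < f x := by
      by_cases hfx : f x = ⊤
      · exact ⟨y - g x + 1, by linarith, by rw [hfx]; exact EReal.coe_lt_top _⟩
      · obtain ⟨c, hc⟩ : ∃ c : ℝ, f x = (c:EReal) :=
          ⟨(f x).toReal, (EReal.coe_toReal hfx (hb x)).symm⟩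
        rw [hc] at hy
        have hy' : y < c + g x := by exact_mod_cast hy
        refine ⟨(y - g x + c)/2, by linarith, ?_⟩
        rw [hc]
        exact_mod_cast (by linarith : (y - g x + c)/2 < c)
    obtain ⟨r, hr1, hr2⟩ := hr
    have E1 := hf x (r:EReal) hr2
    have E2 : ∀ᶠ u in 𝓝 x, g x - (r - (y - g x)) < g u :=
      (hg.continuousAt (x := x)).eventually_mem (Ioi_mem_nhds (by linarith))
    filter_upwards [E1, E2] with u h1 h2
    show (y:EReal) < f u + ((g u : ℝ):EReal)
    have hyr : ((y:ℝ):EReal) < ((r + g u : ℝ) : EReal) := by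
      exact_mod_cast (by linarith : y < r + g u)
    calc ((y:ℝ):EReal) < ((r + g u : ℝ) : EReal) := hyr
      _ = (r:EReal) + (g u : EReal) := EReal.coe_add _ _
      _ < f u + (g u : EReal) := EReal.add_lt_add_right_coe h1 (g u)

/-- Lower semicontinuity of the real truncation. -/
lemma lsc_trunc {h : X → EReal} (hlsc : LowerSemicontinuous h) {c M : ℝ}
    (hc : ∀ u, (c:EReal) ≤ h u) :
    LowerSemicontinuous fun u => (min (h u) (M:EReal)).toReal := by
  have hne_top : ∀ u, min (h u) (M:EReal) ≠ ⊤ :=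
    fun u => ((min_le_right _ _).trans_lt (EReal.coe_lt_top M)).ne
  have hne_bot : ∀ u, min (h u) (M:EReal) ≠ ⊥ := by
    intro u
    have : ((min c M : ℝ):EReal) ≤ min (h u) (M:EReal) := by
      refine le_min ?_ ?_
      · exact le_trans (by exact_mod_cast min_le_left c M) (hc u)
      · exact_mod_cast min_le_right c M
    exact fun hB => by simp [hB] at this
  intro x y hy
  have hyx : (y:EReal) < min (h x) (M:EReal) := by
    have := EReal.coe_toReal (hne_top x) (hne_bot x)
    rw [← this]
    exact_mod_cast hy
  have hy1 : (y:EReal) < h x := hyx.trans_le (min_le_left _ _)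
  have hy2 : (y:EReal) < (M:EReal) := hyx.trans_le (min_le_right _ _)
  filter_upwards [hlsc x (y:EReal) hy1] with u h1
  have h2 : (y:EReal) < min (h u) (M:EReal) := lt_min h1 hy2
  have h3 := EReal.coe_toReal (hne_top u) (hne_bot u)
  rw [← h3] at h2
  exact_mod_cast h2

/-- Ekeland's variational principle (weak form). -/
lemma ekeland [CompleteSpace X] (h : X → ℝ) (hlsc : LowerSemicontinuous h) {m : ℝ}
    (hm : ∀ u, m ≤ h u) {ε : ℝ} (hε : 0 < ε) (x₀ : X) :
    ∃ w, h w ≤ h x₀ ∧ ∀ u, h w ≤ h u + ε * dist u w := by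
  classical
  set S : X → Set X := fun v => {u | h u + ε * dist u v ≤ h v} with hS
  have hself : ∀ v, v ∈ S v := by intro v; simp [hS]
  have hScl : ∀ v, IsClosed (S v) := by
    intro v
    have hcont : Continuous fun u : X => ε * dist u v :=
      continuous_const.mul (continuous_id.dist continuous_const)
    have : LowerSemicontinuous fun u => h u + ε * dist u v :=
      hlsc.add hcont.lowerSemicontinuous
    exact this.isClosed_preimage (h v)
  have hsub : ∀ v v', v' ∈ S v → S v' ⊆ S v := by
    intro v v' hv' u hu
    simp only [hS, mem_setOf_eq] at *
    have ht := dist_triangle u v' v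
    nlinarith [mul_le_mul_of_nonneg_left (dist_triangle u v' v) hε.le]
  have hne : ∀ v, (h '' S v).Nonempty := fun v => ⟨h v, v, hself v, rfl⟩
  have hbd : ∀ v, BddBelow (h '' S v) := fun v => ⟨m, by rintro r ⟨u, _, rfl⟩; exact hm u⟩
  have step : ∀ (n : ℕ) (v : X), ∃ v', v' ∈ S v ∧ h v' ≤ sInf (h '' S v) + (1/2)^n := by
    intro n v
    obtain ⟨r, ⟨u, hu, rfl⟩, hr⟩ :=
      exists_lt_of_csInf_lt (hne v) (lt_add_of_pos_right (sInf (h '' S v)) (show (0:ℝ) < (1/2)^n by positivity))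
    exact ⟨u, hu, hr.le⟩
  choose nxt hnxt1 hnxt2 using step
  set xx : ℕ → X := fun n => Nat.rec x₀ (fun k v => nxt k v) n with hxx
  have hmem : ∀ n, xx (n+1) ∈ S (xx n) := fun n => hnxt1 n (xx n)
  have hchain : ∀ n k, n ≤ k → xx k ∈ S (xx n) := by
    intro n k hk
    induction k, hk using Nat.le_induction with
    | base => exact hself _
    | succ k hk ih => exact hsub (xx n) (xx k) ih (hmem k)
  have hdec : ∀ n k, n ≤ k → h (xx k) + ε * dist (xx k) (xx n) ≤ h (xx n) :=
    fun n k hk => hchain n k hk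
  have hanti : Antitone fun n => h (xx n) := by
    refine antitone_nat_of_succ_le fun n => ?_
    have := hdec n (n+1) (Nat.le_succ n)
    nlinarith [mul_nonneg hε.le (dist_nonneg (x := xx (n+1)) (y := xx n))]
  have hbdd : BddBelow (range fun n => h (xx n)) := ⟨m, by rintro r ⟨n, rfl⟩; exact hm _⟩
  set L : ℝ := ⨅ n, h (xx n) with hLdef
  have hL : Tendsto (fun n => h (xx n)) atTop (𝓝 L) := tendsto_atTop_ciInf hanti hbdd
  have hgeL : ∀ n, L ≤ h (xx n) := fun n => ciInf_le hbdd n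
  have hcauchy : CauchySeq xx := by
    rw [Metric.cauchySeq_iff']
    intro δ hδ
    obtain ⟨N, hN⟩ := (hL.eventually (gt_mem_nhds
      (lt_add_of_pos_right L (mul_pos hε hδ)))).exists
    refine ⟨N, fun n hn => ?_⟩
    have h1 := hdec N n hn
    have h2 := hgeL n
    nlinarith
  obtain ⟨w, hw⟩ := cauchySeq_tendsto_of_complete hcauchy
  have hwS : ∀ n, w ∈ S (xx n) := fun n =>
    (hScl (xx n)).mem_of_tendsto hw (eventually_atTop.2 ⟨n, fun k hk => hchain n k hk⟩)
  refine ⟨w, ?_, ?_⟩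
  · have h0 := hwS 0
    simp only [hS, mem_setOf_eq] at h0
    have : (xx 0 : X) = x₀ := rfl
    rw [this] at h0
    nlinarith [mul_nonneg hε.le (dist_nonneg (x := w) (y := x₀))]
  · intro u
    by_contra hcon
    push_neg at hcon
    have huS : ∀ n, u ∈ S (xx n) := by
      intro n
      have h1 := hwS n
      simp only [hS, mem_setOf_eq] at h1 ⊢
      have ht := dist_triangle u w (xx n)
      nlinarith [mul_le_mul_of_nonneg_left (dist_triangle u w (xx n)) hε.le]
    have key : ∀ n, h w ≤ h u + (1/2)^n := by
      intro n
      have h2 : sInf (h '' S (xx n)) ≤ h u := csInf_le (hbd _) ⟨u, huS n, rfl⟩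
      have h3 := hnxt2 n (xx n)
      have h4 : h w ≤ h (xx (n+1)) := by
        have h5 := hwS (n+1)
        simp only [hS, mem_setOf_eq] at h5
        nlinarith [mul_nonneg hε.le (dist_nonneg (x := w) (y := xx (n+1)))]
      calc h w ≤ h (xx (n+1)) := h4
        _ ≤ sInf (h '' S (xx n)) + (1/2)^n := h3
        _ ≤ h u + (1/2)^n := by linarith
    have hle : h w ≤ h u := by
      by_contra hc2
      push_neg at hc2
      obtain ⟨n, hn⟩ := exists_pow_lt_of_lt_one (by linarith : (0:ℝ) < h w - h u)
        (by norm_num : (1/2 : ℝ) < 1)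
      linarith [key n]
    nlinarith [mul_nonneg hε.le (dist_nonneg (x := u) (y := w))]

lemma L_decomp (L : (X × ℝ) →L[ℝ] ℝ) (d : X) (r : ℝ) :
    L (d, r) = L (d, 0) + r * L (0, 1) := by
  have hdr : (d, r) = (d, (0:ℝ)) + r • ((0:X), (1:ℝ)) := by
    simp [Prod.ext_iff]
  rw [hdr, map_add, map_smul, smul_eq_mul]

/-- Existence of a continuous affine minorant of a proper lsc convex function. -/
lemma exists_affine_minorant (f : X → EReal) (hlsc : LowerSemicontinuous f)
    (hbot : ∀ z, f z ≠ ⊥) (hproper : ∃ z, f z ≠ ⊤)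
    (hconv : ∀ x y : X, ∀ a b : ℝ, 0 ≤ a → 0 ≤ b → a + b = 1 →
      f (a • x + b • y) ≤ (a : EReal) * f x + (b : EReal) * f y) :
    ∃ (l : X →L[ℝ] ℝ) (c : ℝ), ∀ v, ((l v + c : ℝ) : EReal) ≤ f v := by
  obtain ⟨z, hz⟩ := hproper
  obtain ⟨cz, hcz⟩ : ∃ c : ℝ, f z = (c:EReal) :=
    ⟨(f z).toReal, (EReal.coe_toReal hz (hbot z)).symm⟩
  set E : Set (X × ℝ) := {p | f p.1 ≤ (p.2 : EReal)} with hE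
  have hclosed : IsClosed E := by
    rw [← isOpen_compl_iff, isOpen_iff_mem_nhds]
    rintro ⟨p1, p2⟩ hp
    simp only [hE, mem_compl_iff, mem_setOf_eq, not_le] at hp
    obtain ⟨r, hr1, hr2⟩ := EReal.lt_iff_exists_real_btwn.1 hp
    have E1 : ∀ᶠ q1 in 𝓝 p1, (r:EReal) < f q1 := hlsc p1 (r:EReal) hr2
    have hmem : {q : X × ℝ | ((r:EReal) < f q.1) ∧ q.2 < r} ∈ 𝓝 (p1, p2) := by
      rw [nhds_prod_eq]
      exact prod_mem_prod E1 (Iio_mem_nhds (by exact_mod_cast hr1))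
    refine mem_of_superset hmem ?_
    rintro ⟨q1, q2⟩ ⟨hq1, hq2⟩
    simp only [hE, mem_compl_iff, mem_setOf_eq, not_le]
    exact lt_trans (by exact_mod_cast hq2) hq1
  have hconvE : Convex ℝ E := by
    rintro ⟨p1, p2⟩ hp ⟨q1, q2⟩ hq a b ha hb hab
    simp only [hE, mem_setOf_eq] at hp hq ⊢
    have hfp : f p1 ≠ ⊤ := fun ht => by simp [ht] at hp
    have hfq : f q1 ≠ ⊤ := fun ht => by simp [ht] at hq
    obtain ⟨s1, hs1⟩ : ∃ s : ℝ, f p1 = (s:EReal) :=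
      ⟨(f p1).toReal, (EReal.coe_toReal hfp (hbot p1)).symm⟩
    obtain ⟨s2, hs2⟩ : ∃ s : ℝ, f q1 = (s:EReal) :=
      ⟨(f q1).toReal, (EReal.coe_toReal hfq (hbot q1)).symm⟩
    have h1 := hconv p1 q1 a b ha hb hab
    rw [hs1, hs2] at h1
    have hp' : s1 ≤ p2 := by rw [hs1] at hp; exact_mod_cast hp
    have hq' : s2 ≤ q2 := by rw [hs2] at hq; exact_mod_cast hq
    have h2 : ((a:EReal) * (s1:EReal) + (b:EReal) * (s2:EReal)) =
        ((a * s1 + b * s2 : ℝ) : EReal) := by norm_cast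
    rw [h2] at h1
    have hsm : (a • (p1, p2) + b • (q1, q2) : X × ℝ).1 = a • p1 + b • q1 := rfl
    have hsm2 : (a • (p1, p2) + b • (q1, q2) : X × ℝ).2 = a * p2 + b * q2 := rfl
    rw [hsm, hsm2]
    refine le_trans h1 ?_
    exact_mod_cast (by nlinarith : a * s1 + b * s2 ≤ a * p2 + b * q2)
  have hout : ((z, cz - 1) : X × ℝ) ∉ E := by
    simp only [hE, mem_setOf_eq, not_le, hcz]
    exact_mod_cast (by linarith : cz - 1 < cz)
  obtain ⟨L, u, hLz, hLE⟩ := geometric_hahn_banach_point_closed hconvE hclosed hout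
  set ψ : X → ℝ := fun d => L (d, 0) with hψ
  set α : ℝ := L (0, 1) with hα
  have hLd : ∀ (d : X) (r : ℝ), L (d, r) = ψ d + r * α := fun d r => L_decomp L d r
  have hmem2 : ∀ s, cz ≤ s → ((z, s) : X × ℝ) ∈ E := by
    intro s hs
    simp only [hE, mem_setOf_eq, hcz]
    exact_mod_cast hs
  have hαpos : 0 < α := by
    rcases lt_trichotomy α 0 with hneg | h0 | hpos
    · exfalso
      set s : ℝ := max cz ((u - ψ z)/α + 1) with hsdef
      have h1 := hLE (z, s) (hmem2 s (le_max_left _ _))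
      rw [hLd] at h1
      have h2 : (u - ψ z)/α + 1 ≤ s := le_max_right _ _
      have h3 : s * α ≤ ((u - ψ z)/α + 1) * α := by
        exact mul_le_mul_of_nonpos_right h2 hneg.le
      have hα0 : α ≠ 0 := hneg.ne
      have h4 : ((u - ψ z)/α + 1) * α = (u - ψ z) + α := by field_simp
      nlinarith
    · exfalso
      have h1 := hLE (z, cz) (hmem2 cz le_rfl)
      rw [hLd] at h1
      rw [hLd] at hLz
      rw [h0] at h1 hLz
      simp at h1 hLz
      linarith
    · exact hpos
  refine ⟨(-(α⁻¹)) • (L.comp (ContinuousLinearMap.inl ℝ X ℝ)), u/α, ?_⟩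
  intro v
  by_cases hv : f v = ⊤
  · simp [hv]
  · obtain ⟨c, hc⟩ : ∃ c : ℝ, f v = (c:EReal) :=
      ⟨(f v).toReal, (EReal.coe_toReal hv (hbot v)).symm⟩
    have h1 := hLE (v, c) (show f v ≤ ((c:ℝ):EReal) from le_of_eq hc)
    rw [hLd] at h1
    rw [hc]
    have happ : ((-(α⁻¹)) • (L.comp (ContinuousLinearMap.inl ℝ X ℝ))) v
        = -(α⁻¹) * ψ v := by
      simp [hψ, ContinuousLinearMap.smul_apply, ContinuousLinearMap.comp_apply]
    rw [happ]
    have : -(α⁻¹) * ψ v + u/α ≤ c := by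
      have h2 : (u - ψ v)/α < c := by
        rw [div_lt_iff₀ hαpos]
        nlinarith
      have h3 : -(α⁻¹) * ψ v + u/α = (u - ψ v)/α := by
        have hα0 : α ≠ 0 := hαpos.ne'
        field_simp
        ring
      linarith
    exact_mod_cast this

/-- Convexity (in inequality form) is stable under adding a continuous linear functional. -/
lemma hconv_add_linear (f : X → EReal)
    (hbot : ∀ z, f z ≠ ⊥)
    (hconv : ∀ x y : X, ∀ a b : ℝ, 0 ≤ a → 0 ≤ b → a + b = 1 →
      f (a • x + b • y) ≤ (a : EReal) * f x + (b : EReal) * f y)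
    (l : X →L[ℝ] ℝ) :
    ∀ x y : X, ∀ a b : ℝ, 0 ≤ a → 0 ≤ b → a + b = 1 →
      f (a • x + b • y) + ((l (a • x + b • y) : ℝ) : EReal) ≤
        (a : EReal) * (f x + ((l x : ℝ) : EReal)) + (b : EReal) * (f y + ((l y : ℝ) : EReal)) := by
  intro x y a b ha hb hab
  rcases eq_or_lt_of_le ha with ha0 | ha'
  · have hb1 : b = 1 := by linarith
    subst hb1
    rw [← ha0]
    simp
  rcases eq_or_lt_of_le hb with hb0 | hb'
  · have ha1 : a = 1 := by linarith
    subst ha1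
    rw [← hb0]
    simp
  have hane : ((0:ℝ):EReal) < (a:EReal) := by exact_mod_cast ha'
  have hbne : ((0:ℝ):EReal) < (b:EReal) := by exact_mod_cast hb'
  by_cases hfx : f x = ⊤
  · have hterm : (a:EReal) * (f x + ((l x : ℝ) : EReal)) = ⊤ := by
      rw [hfx]
      rw [EReal.top_add_of_ne_bot (EReal.coe_ne_bot _)]
      exact EReal.mul_top_of_pos hane
    rw [hterm]
    have hne : (b:EReal) * (f y + ((l y : ℝ) : EReal)) ≠ ⊥ := by
      by_cases hfy : f y = ⊤
      · rw [hfy, EReal.top_add_of_ne_bot (EReal.coe_ne_bot _), EReal.mul_top_of_pos hbne]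
        simp
      · obtain ⟨s, hs⟩ : ∃ s : ℝ, f y = (s:EReal) :=
          ⟨(f y).toReal, (EReal.coe_toReal hfy (hbot y)).symm⟩
        rw [hs, ← EReal.coe_add, ← EReal.coe_mul]
        exact EReal.coe_ne_bot _
    rw [EReal.top_add_of_ne_bot hne]
    exact le_top
  by_cases hfy : f y = ⊤
  · have hterm : (b:EReal) * (f y + ((l y : ℝ) : EReal)) = ⊤ := by
      rw [hfy, EReal.top_add_of_ne_bot (EReal.coe_ne_bot _)]
      exact EReal.mul_top_of_pos hbne
    rw [hterm]
    have hne : (a:EReal) * (f x + ((l x : ℝ) : EReal)) ≠ ⊥ := by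
      obtain ⟨s, hs⟩ : ∃ s : ℝ, f x = (s:EReal) :=
        ⟨(f x).toReal, (EReal.coe_toReal hfx (hbot x)).symm⟩
      rw [hs, ← EReal.coe_add, ← EReal.coe_mul]
      exact EReal.coe_ne_bot _
    rw [EReal.add_top_of_ne_bot hne]
    exact le_top
  · obtain ⟨s1, hs1⟩ : ∃ s : ℝ, f x = (s:EReal) :=
      ⟨(f x).toReal, (EReal.coe_toReal hfx (hbot x)).symm⟩
    obtain ⟨s2, hs2⟩ : ∃ s : ℝ, f y = (s:EReal) :=
      ⟨(f y).toReal, (EReal.coe_toReal hfy (hbot y)).symm⟩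
    have h1 := hconv x y a b ha hb hab
    rw [hs1, hs2] at h1
    have h2 : ((a:EReal) * (s1:EReal) + (b:EReal) * (s2:EReal)) =
        ((a * s1 + b * s2 : ℝ) : EReal) := by norm_cast
    rw [h2] at h1
    rw [hs1, hs2]
    have h3 : (a:EReal) * ((s1:EReal) + ((l x : ℝ):EReal)) + (b:EReal) * ((s2:EReal) + ((l y : ℝ):EReal))
        = ((a * (s1 + l x) + b * (s2 + l y) : ℝ) : EReal) := by norm_cast
    rw [h3]
    have h4 : l (a • x + b • y) = a * l x + b * l y := by
      rw [map_add, map_smul, map_smul]; simp [smul_eq_mul]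
    calc f (a • x + b • y) + ((l (a • x + b • y) : ℝ) : EReal)
        ≤ ((a * s1 + b * s2 : ℝ) : EReal) + ((l (a • x + b • y) : ℝ) : EReal) :=
          add_le_add_left h1 _
      _ = ((a * s1 + b * s2 + (a * l x + b * l y) : ℝ) : EReal) := by
          rw [h4, ← EReal.coe_add]
      _ = ((a * (s1 + l x) + b * (s2 + l y) : ℝ) : EReal) := by ring_nf
      _ ≤ _ := le_rfl

/-- The Moreau–Rockafellar-type sandwich: if `w` minimizes `f₁ + g₂` with `g₂`
real-valued convex continuous, then a suitable linear separation exists. -/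
lemma sandwich (f₁ : X → EReal) (g₂ : X → ℝ) (w : X)
    (hf₁w : f₁ w ≠ ⊤) (hbot : ∀ u, f₁ u ≠ ⊥)
    (hconv₁ : ∀ x y : X, ∀ a b : ℝ, 0 ≤ a → 0 ≤ b → a + b = 1 →
      f₁ (a • x + b • y) ≤ (a : EReal) * f₁ x + (b : EReal) * f₁ y)
    (hg₂ : ∀ x y : X, ∀ a b : ℝ, 0 ≤ a → 0 ≤ b → a + b = 1 →
      g₂ (a • x + b • y) ≤ a * g₂ x + b * g₂ y)
    (hg₂cont : Continuous g₂)
    (hmin : ∀ u, f₁ w + ((g₂ w : ℝ) : EReal) ≤ f₁ u + ((g₂ u : ℝ) : EReal)) :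
    ∃ φ : X →L[ℝ] ℝ, (∀ u, φ u - φ w ≤ g₂ u - g₂ w) ∧
      (∀ u, f₁ w ≤ f₁ u + ((φ u - φ w : ℝ) : EReal)) := by
  obtain ⟨cw, hcw⟩ : ∃ c : ℝ, f₁ w = (c:EReal) :=
    ⟨(f₁ w).toReal, (EReal.coe_toReal hf₁w (hbot w)).symm⟩
  have hwcombo : ∀ (a b : ℝ) (d₁ d₂ : X), a + b = 1 →
      a • (w + d₁) + b • (w + d₂) = w + (a • d₁ + b • d₂) := by
    intro a b d₁ d₂ hab
    have hw : a • w + b • w = w := by rw [← add_smul, hab, one_smul]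
    have hexp : a • (w + d₁) + b • (w + d₂) = (a • w + b • w) + (a • d₁ + b • d₂) := by
      rw [smul_add, smul_add]; abel
    rw [hexp, hw]
  set O : Set (X × ℝ) := {p | g₂ (w + p.1) - g₂ w < p.2} with hO
  set C : Set (X × ℝ) := {p | f₁ (w + p.1) + ((p.2 : ℝ) : EReal) ≤ f₁ w} with hC
  have hOopen : IsOpen O := by
    have h1 : Continuous fun p : X × ℝ => g₂ (w + p.1) - g₂ w :=
      (hg₂cont.comp (continuous_const.add continuous_fst)).sub continuous_const
    exact isOpen_lt h1 continuous_snd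
  have hOconv : Convex ℝ O := by
    rintro ⟨d₁, r₁⟩ hp ⟨d₂, r₂⟩ hq a b ha hb hab
    simp only [hO, mem_setOf_eq] at hp hq ⊢
    have hcombo := hwcombo a b d₁ d₂ hab
    have hsm : (a • (d₁, r₁) + b • (d₂, r₂) : X × ℝ).1 = a • d₁ + b • d₂ := rfl
    have hsm2 : (a • (d₁, r₁) + b • (d₂, r₂) : X × ℝ).2 = a * r₁ + b * r₂ := rfl
    rw [hsm, hsm2, ← hcombo]
    have h1 := hg₂ (w + d₁) (w + d₂) a b ha hb hab
    rcases eq_or_lt_of_le ha with ha0 | ha'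
    · have hb1 : b = 1 := by linarith
      rw [← ha0] at h1 ⊢
      rw [hb1] at h1 ⊢
      simp only [zero_mul, one_mul, zero_add] at h1 ⊢
      linarith
    rcases eq_or_lt_of_le hb with hb0 | hb'
    · have ha1 : a = 1 := by linarith
      rw [← hb0] at h1 ⊢
      rw [ha1] at h1 ⊢
      simp only [zero_mul, one_mul, add_zero] at h1 ⊢
      linarith
    have hgw : a * g₂ w + b * g₂ w = g₂ w := by rw [← add_mul, hab, one_mul]
    nlinarith [mul_lt_mul_of_pos_left hp ha', mul_lt_mul_of_pos_left hq hb', hgw]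
  have hCconv : Convex ℝ C := by
    rintro ⟨d₁, r₁⟩ hp ⟨d₂, r₂⟩ hq a b ha hb hab
    simp only [hC, mem_setOf_eq] at hp hq ⊢
    have hfp : f₁ (w + d₁) ≠ ⊤ := by
      intro ht; rw [ht, EReal.top_add_of_ne_bot (EReal.coe_ne_bot _), hcw] at hp
      simp at hp
    have hfq : f₁ (w + d₂) ≠ ⊤ := by
      intro ht; rw [ht, EReal.top_add_of_ne_bot (EReal.coe_ne_bot _), hcw] at hq
      simp at hq
    obtain ⟨s1, hs1⟩ : ∃ s : ℝ, f₁ (w + d₁) = (s:EReal) :=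
      ⟨_, (EReal.coe_toReal hfp (hbot _)).symm⟩
    obtain ⟨s2, hs2⟩ : ∃ s : ℝ, f₁ (w + d₂) = (s:EReal) :=
      ⟨_, (EReal.coe_toReal hfq (hbot _)).symm⟩
    have hp' : s1 + r₁ ≤ cw := by
      rw [hs1, hcw, ← EReal.coe_add] at hp; exact_mod_cast hp
    have hq' : s2 + r₂ ≤ cw := by
      rw [hs2, hcw, ← EReal.coe_add] at hq; exact_mod_cast hq
    have hcombo := hwcombo a b d₁ d₂ hab
    have hsm : (a • (d₁, r₁) + b • (d₂, r₂) : X × ℝ).1 = a • d₁ + b • d₂ := rfl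
    have hsm2 : (a • (d₁, r₁) + b • (d₂, r₂) : X × ℝ).2 = a * r₁ + b * r₂ := rfl
    rw [hsm, hsm2, ← hcombo]
    have h1 := hconv₁ (w + d₁) (w + d₂) a b ha hb hab
    rw [hs1, hs2] at h1
    have h2 : ((a:EReal) * (s1:EReal) + (b:EReal) * (s2:EReal)) =
        ((a * s1 + b * s2 : ℝ) : EReal) := by norm_cast
    rw [h2] at h1
    calc f₁ (a • (w + d₁) + b • (w + d₂)) + ((a * r₁ + b * r₂ : ℝ) : EReal)
        ≤ ((a * s1 + b * s2 : ℝ) : EReal) + ((a * r₁ + b * r₂ : ℝ) : EReal) :=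
          add_le_add_left h1 _
      _ = ((a * s1 + b * s2 + (a * r₁ + b * r₂) : ℝ) : EReal) := by rw [← EReal.coe_add]
      _ ≤ (cw : EReal) := by
          have hcw2 : a * cw + b * cw = cw := by rw [← add_mul, hab, one_mul]
          exact_mod_cast (by nlinarith [mul_le_mul_of_nonneg_left hp' ha,
            mul_le_mul_of_nonneg_left hq' hb, hcw2] :
            a * s1 + b * s2 + (a * r₁ + b * r₂) ≤ cw)
      _ = f₁ w := hcw.symm
  have hdisj : Disjoint O C := by
    rw [Set.disjoint_left]
    rintro ⟨d, r⟩ hpO hpC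
    simp only [hO, mem_setOf_eq] at hpO
    simp only [hC, mem_setOf_eq] at hpC
    have hfp : f₁ (w + d) ≠ ⊤ := by
      intro ht; rw [ht, EReal.top_add_of_ne_bot (EReal.coe_ne_bot _), hcw] at hpC
      simp at hpC
    obtain ⟨s, hs⟩ : ∃ s : ℝ, f₁ (w + d) = (s:EReal) :=
      ⟨_, (EReal.coe_toReal hfp (hbot _)).symm⟩
    have hpC' : s + r ≤ cw := by
      rw [hs, hcw, ← EReal.coe_add] at hpC; exact_mod_cast hpC
    have hm := hmin (w + d)
    rw [hs, hcw, ← EReal.coe_add, ← EReal.coe_add] at hm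
    have hm' : cw + g₂ w ≤ s + g₂ (w + d) := by exact_mod_cast hm
    linarith
  obtain ⟨L, u, hLO, hLC⟩ := geometric_hahn_banach_open hOconv hOopen hCconv hdisj
  set ψ : X → ℝ := fun d => L (d, 0) with hψ
  set α : ℝ := L (0, 1) with hα
  have hLd : ∀ (d : X) (r : ℝ), L (d, r) = ψ d + r * α := fun d r => L_decomp L d r
  have h00C : ((0 : X), (0:ℝ)) ∈ C := by
    simp only [hC, mem_setOf_eq, add_zero]
    rw [EReal.coe_zero, add_zero]
  have hψ0 : ψ 0 = 0 := by
    have : ((0:X), (0:ℝ)) = (0 : X × ℝ) := rfl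
    simp only [hψ]
    rw [this, map_zero]
  have hu0 : u ≤ 0 := by
    have h := hLC _ h00C
    rw [hLd, hψ0] at h
    linarith
  have hρO : ∀ ρ : ℝ, 0 < ρ → ((0 : X), ρ) ∈ O := by
    intro ρ hρ
    simp only [hO, mem_setOf_eq, add_zero]
    linarith
  have hρα : ∀ ρ : ℝ, 0 < ρ → ρ * α < u := by
    intro ρ hρ
    have h := hLO _ (hρO ρ hρ)
    rw [hLd, hψ0] at h
    linarith
  have hunonneg : 0 ≤ u := by
    by_contra hcu
    push_neg at hcu
    have hαneg : α < 0 := by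
      have := hρα 1 one_pos
      nlinarith
    have hα0 : α ≠ 0 := hαneg.ne
    have h1 := hρα (u/α) (div_pos_of_neg_of_neg hcu hαneg)
    rw [div_mul_cancel₀ u hα0] at h1
    exact lt_irrefl u h1
  have huz : u = 0 := le_antisymm hu0 hunonneg
  have hαneg : α < 0 := by
    have := hρα 1 one_pos
    rw [huz] at this
    nlinarith
  refine ⟨(-(α⁻¹)) • (L.comp (ContinuousLinearMap.inl ℝ X ℝ)), ?_, ?_⟩
  all_goals
    have happ : ∀ d : X, ((-(α⁻¹)) • (L.comp (ContinuousLinearMap.inl ℝ X ℝ))) d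
        = -(α⁻¹) * ψ d := by
      intro d
      simp [hψ, ContinuousLinearMap.smul_apply, ContinuousLinearMap.comp_apply]
  · -- φ u - φ w ≤ g₂ u - g₂ w
    intro v
    rw [happ v, happ w]
    have hkey : ∀ d : X, -(α⁻¹) * ψ d ≤ g₂ (w + d) - g₂ w := by
      intro d
      by_contra hcon
      push_neg at hcon
      set r : ℝ := (g₂ (w + d) - g₂ w + (-(α⁻¹) * ψ d)) / 2 with hr
      have hrO : ((d, r) : X × ℝ) ∈ O := by
        simp only [hO, mem_setOf_eq, hr]; linarith
      have := hLO _ hrO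
      rw [hLd, huz] at this
      -- ψ d + r * α < 0, α < 0 ⇒ -(α⁻¹) * ψ d < r, but r < -(α⁻¹) * ψ d
      have h2 : -(α⁻¹) * ψ d < r := by
        have h3 : ψ d < r * (-α) := by linarith
        have h4 : ψ d / (-α) < r := (div_lt_iff₀ (by linarith : (0:ℝ) < -α)).2 h3
        have h5 : -(α⁻¹) * ψ d = ψ d / (-α) := by
          rw [div_eq_mul_inv, inv_neg]; ring
        linarith
      have h6 : r < -(α⁻¹) * ψ d := by rw [hr]; linarith
      linarith
    have h7 := hkey (v - w)
    have h8 : ψ (v - w) = ψ v - ψ w := by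
      simp only [hψ]
      have : ((v - w, (0:ℝ)) : X × ℝ) = (v, 0) - (w, 0) := by simp [Prod.ext_iff]
      rw [this, map_sub]
    rw [h8] at h7
    have h9 : w + (v - w) = v := by abel
    rw [h9] at h7
    linarith [h7]
  · -- f₁ w ≤ f₁ u + (φ u - φ w)
    intro v
    rw [happ v, happ w]
    by_cases hv : f₁ v = ⊤
    · rw [hv, EReal.top_add_of_ne_bot (EReal.coe_ne_bot _)]
      exact le_top
    obtain ⟨s, hs⟩ : ∃ s : ℝ, f₁ v = (s:EReal) :=
      ⟨_, (EReal.coe_toReal hv (hbot _)).symm⟩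
    have hCmem : ((v - w, cw - s) : X × ℝ) ∈ C := by
      simp only [hC, mem_setOf_eq]
      have h9 : w + (v - w) = v := by abel
      rw [h9, hs, hcw, ← EReal.coe_add]
      exact_mod_cast (by linarith : s + (cw - s) ≤ cw)
    have := hLC _ hCmem
    rw [hLd, huz] at this
    -- 0 ≤ ψ (v-w) + (cw - s) * α  with α < 0 ⇒ cw - s ≤ -(α⁻¹) * ψ (v-w)
    have h8 : ψ (v - w) = ψ v - ψ w := by
      simp only [hψ]
      have heq : ((v - w, (0:ℝ)) : X × ℝ) = (v, 0) - (w, 0) := by simp [Prod.ext_iff]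
      rw [heq, map_sub]
    rw [h8] at this
    have h10 : cw - s ≤ -(α⁻¹) * ψ v - -(α⁻¹) * ψ w := by
      have h11 : -(ψ v - ψ w) ≤ (cw - s) * α := by linarith
      have h12 : (cw - s) ≤ -(ψ v - ψ w) / α := by
        rw [le_div_iff_of_neg hαneg]
        linarith
      have h13 : -(ψ v - ψ w) / α = -(α⁻¹) * ψ v - -(α⁻¹) * ψ w := by
        rw [div_eq_mul_inv]; ring
      linarith
    rw [hcw, hs, ← EReal.coe_add]
    exact_mod_cast (by linarith : cw ≤ s + (-(α⁻¹) * ψ v - -(α⁻¹) * ψ w))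


set_option maxHeartbeats 2000000 in
/-- A point monotonically related to the graph of the convex subdifferential belongs to it
(Rockafellar's maximal monotonicity). -/
lemma polar_mem_cxSub [CompleteSpace X] (f : X → EReal) (hlsc : LowerSemicontinuous f)
    (hbot : ∀ z, f z ≠ ⊥) (hproper : ∃ z, f z ≠ ⊤)
    (hconv : ∀ x y : X, ∀ a b : ℝ, 0 ≤ a → 0 ≤ b → a + b = 1 →
      f (a • x + b • y) ≤ (a : EReal) * f x + (b : EReal) * f y)
    (x : X) (xs : X →L[ℝ] ℝ)
    (hpolar : ∀ (y : X) (ys : X →L[ℝ] ℝ),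
      (∀ v, ((ys (v - y) : ℝ) : EReal) + f y ≤ f v) → 0 ≤ (ys - xs) (y - x)) :
    ∀ v, ((xs (v - x) : ℝ) : EReal) + f x ≤ f v := by
  obtain ⟨l, c0, hminor⟩ := exists_affine_minorant f hlsc hbot hproper hconv
  have key : ∀ (v : X) (s δ : ℝ), 0 < s → 0 < δ →
      f x ≤ f v + ((xs x - xs v + ‖v - x‖^2/(2*s) + δ : ℝ) : EReal) := by
    intro v s δ hs hδ
    by_cases hfv : f v = ⊤
    · rw [hfv, EReal.top_add_of_ne_bot (EReal.coe_ne_bot _)]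
      exact le_top
    obtain ⟨cv, hcv⟩ : ∃ c : ℝ, f v = (c:EReal) := ⟨_, (EReal.coe_toReal hfv (hbot v)).symm⟩
    by_contra hcon
    push_neg at hcon
    rw [hcv, ← EReal.coe_add] at hcon
    set B : ℝ := cv + (xs x - xs v + ‖v - x‖^2/(2*s) + δ) with hB
    obtain ⟨ρ, hρ, hball⟩ := Metric.eventually_nhds_iff.1 (hlsc x (B:EReal) hcon)
    set ρ' : ℝ := min (ρ/2) (δ/(4*(‖xs‖+1))) with hρ'
    have hρ'pos : 0 < ρ' := lt_min (by linarith) (by positivity)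
    set g : X → ℝ := fun u => ‖u - x‖^2/(2*s) - xs u with hg
    have hgcont : Continuous g := by
      rw [hg]
      exact (((continuous_id.sub continuous_const).norm.pow 2).div_const _).sub xs.continuous
    set h : X → EReal := fun u => f u + ((g u : ℝ) : EReal) with hh
    have hlsch : LowerSemicontinuous h := lsc_add_cont hlsc hbot hgcont
    have hhbot : ∀ u, h u ≠ ⊥ := by
      intro u
      show f u + ((g u : ℝ) : EReal) ≠ ⊥
      simp only [ne_eq, EReal.add_eq_bot_iff, EReal.coe_ne_bot, or_false]
      exact hbot u
    obtain ⟨m, hm⟩ : ∃ m : ℝ, ∀ u, (m:EReal) ≤ h u := by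
      refine ⟨c0 - (‖l‖ + ‖xs‖) * ‖x‖ - (s/2) * (‖l‖ + ‖xs‖)^2, fun u => ?_⟩
      have h1 := hminor u
      have h2 : ((l u + c0 + g u : ℝ) : EReal) ≤ h u := by
        show ((l u + c0 + g u : ℝ) : EReal) ≤ f u + ((g u : ℝ) : EReal)
        calc ((l u + c0 + g u : ℝ) : EReal) = ((l u + c0 : ℝ):EReal) + ((g u:ℝ):EReal) := by
              rw [← EReal.coe_add]
          _ ≤ f u + ((g u:ℝ):EReal) := add_le_add_left h1 _
      refine le_trans ?_ h2
      refine EReal.coe_le_coe_iff.2 ?_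
      have hK : |l u - xs u| ≤ (‖l‖ + ‖xs‖) * (‖u - x‖ + ‖x‖) := by
        calc |l u - xs u| = |(l - xs) u| := by rw [ContinuousLinearMap.sub_apply]
          _ ≤ ‖l - xs‖ * ‖u‖ := (l - xs).le_opNorm u
          _ ≤ (‖l‖ + ‖xs‖) * (‖u - x‖ + ‖x‖) := by
              refine mul_le_mul (norm_sub_le l xs) ?_ (norm_nonneg u) (by positivity)
              calc ‖u‖ = ‖(u - x) + x‖ := by rw [sub_add_cancel]
                _ ≤ ‖u - x‖ + ‖x‖ := norm_add_le _ _
      have habs := (abs_le.1 hK).1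
      have h2s : (0:ℝ) < 2*s := by linarith
      have hquad : (‖l‖ + ‖xs‖) * ‖u - x‖ ≤ ‖u - x‖^2/(2*s) + (s/2) * (‖l‖ + ‖xs‖)^2 := by
        rw [← sub_nonneg]
        have hexp : ‖u - x‖^2/(2*s) + (s/2) * (‖l‖ + ‖xs‖)^2 - (‖l‖ + ‖xs‖) * ‖u - x‖
            = (‖u - x‖ - s*(‖l‖ + ‖xs‖))^2/(2*s) := by
          field_simp
          ring
        rw [hexp]
        positivity
      have hgu : g u = ‖u - x‖^2/(2*s) - xs u := rfl
      rw [hgu]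
      linarith [habs, hquad]
    set J : Set ℝ := {r | ∃ u, h u = (r:EReal)} with hJ
    have hvJ : h v = ((cv + g v : ℝ):EReal) := by
      show f v + ((g v : ℝ):EReal) = _
      rw [hcv, ← EReal.coe_add]
    have hJne : J.Nonempty := ⟨cv + g v, v, hvJ⟩
    have hJbd : BddBelow J := by
      refine ⟨m, ?_⟩
      rintro r ⟨u, hu⟩
      have h3 := hm u
      rw [hu] at h3
      exact_mod_cast h3
    set cI : ℝ := sInf J with hcI
    have hcIle : ∀ u, (cI : EReal) ≤ h u := by
      intro u
      by_cases hu : h u = ⊤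
      · rw [hu]; exact le_top
      · have h1 : (h u).toReal ∈ J := ⟨u, (EReal.coe_toReal hu (hhbot u)).symm⟩
        have h2 := csInf_le hJbd h1
        rw [← EReal.coe_toReal hu (hhbot u)]
        exact_mod_cast h2
    set ε₁ : ℝ := δ/4 with hε₁
    have hε₁pos : 0 < ε₁ := by rw [hε₁]; linarith
    set ε : ℝ := min (δ/4) (ρ'/(2*s)) with hε
    have hεpos : 0 < ε := lt_min (by linarith) (by positivity)
    obtain ⟨x₀, r₀, hr₀, hr₀lt⟩ : ∃ (x₀ : X) (r₀ : ℝ), h x₀ = (r₀:EReal) ∧ r₀ < cI + ε₁ := by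
      obtain ⟨r, ⟨u, hu⟩, hr⟩ := exists_lt_of_csInf_lt hJne (lt_add_of_pos_right cI hε₁pos)
      exact ⟨u, r, hu, hr⟩
    set M : ℝ := cI + ε₁ + 1 with hM
    set h' : X → ℝ := fun u => (min (h u) ((M:ℝ):EReal)).toReal with hh'
    have hlsc' : LowerSemicontinuous h' := lsc_trunc hlsch hcIle
    have hm' : ∀ u, min cI M ≤ h' u := by
      intro u
      have h1 : ((min cI M : ℝ):EReal) ≤ min (h u) ((M:ℝ):EReal) := by
        refine le_min (le_trans ?_ (hcIle u)) ?_
        · exact_mod_cast min_le_left cI M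
        · exact_mod_cast min_le_right cI M
      have h2 : min (h u) ((M:ℝ):EReal) ≠ ⊤ :=
        ((min_le_right _ _).trans_lt (EReal.coe_lt_top M)).ne
      have h3 : min (h u) ((M:ℝ):EReal) ≠ ⊥ := fun hbo => by rw [hbo] at h1; simp at h1
      rw [← EReal.coe_toReal h2 h3] at h1
      exact_mod_cast h1
    obtain ⟨w, hw1, hw2⟩ := ekeland h' hlsc' hm' hεpos x₀
    have hhx₀' : h' x₀ = r₀ := by
      show (min (h x₀) ((M:ℝ):EReal)).toReal = r₀
      have hrM : ((r₀:ℝ):EReal) ≤ ((M:ℝ):EReal) := by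
        exact_mod_cast (by rw [hM]; linarith : r₀ ≤ M)
      rw [hr₀, min_eq_left hrM, EReal.toReal_coe]
    have hw1' : h' w ≤ r₀ := hhx₀' ▸ hw1
    have hwM : h w < ((M:ℝ):EReal) := by
      by_contra hc
      push_neg at hc
      have h4 : min (h w) ((M:ℝ):EReal) = ((M:ℝ):EReal) := min_eq_right hc
      have h5 : h' w = M := by
        show (min (h w) ((M:ℝ):EReal)).toReal = M
        rw [h4, EReal.toReal_coe]
      rw [hM] at h5
      linarith
    have hwtop : h w ≠ ⊤ := (hwM.trans (EReal.coe_lt_top M)).ne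
    have hhw : ((h' w : ℝ):EReal) = h w := by
      show ((min (h w) ((M:ℝ):EReal)).toReal : EReal) = h w
      rw [min_eq_left hwM.le]
      exact EReal.coe_toReal hwtop (hhbot w)
    have hwmin : ∀ u, h w ≤ h u + ((ε * ‖u - w‖ : ℝ):EReal) := by
      intro u
      by_cases hu : h u = ⊤
      · rw [hu, EReal.top_add_of_ne_bot (EReal.coe_ne_bot _)]; exact le_top
      obtain ⟨cu, hcu⟩ : ∃ c:ℝ, h u = (c:EReal) := ⟨_, (EReal.coe_toReal hu (hhbot u)).symm⟩
      have h1 : h' u ≤ cu := by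
        show (min (h u) ((M:ℝ):EReal)).toReal ≤ cu
        rw [hcu]
        have hmm : ((min cu M : ℝ):EReal) = min ((cu:ℝ):EReal) ((M:ℝ):EReal) :=
          (EReal.coe_strictMono.monotone).map_min
        rw [← hmm, EReal.toReal_coe]
        exact min_le_left _ _
      have h2 := hw2 u
      rw [dist_eq_norm] at h2
      rw [← hhw, hcu, ← EReal.coe_add]
      exact_mod_cast (by linarith : h' w ≤ cu + ε * ‖u - w‖)
    set g₂ : X → ℝ := fun u => ‖u - x‖^2/(2*s) + ε * ‖u - w‖ with hg₂def
    set f₁ : X → EReal := fun u => f u + (((-xs) u : ℝ):EReal) with hf₁def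
    have hsplit : ∀ u, h u + ((ε * ‖u - w‖ : ℝ):EReal) = f₁ u + ((g₂ u:ℝ):EReal) := by
      intro u
      show f u + ((g u:ℝ):EReal) + ((ε * ‖u - w‖:ℝ):EReal)
          = f u + (((-xs) u:ℝ):EReal) + ((g₂ u:ℝ):EReal)
      rw [add_assoc, add_assoc, ← EReal.coe_add, ← EReal.coe_add]
      congr 1
      norm_cast
      show g u + ε * ‖u - w‖ = (-xs) u + g₂ u
      simp only [hg, hg₂def, ContinuousLinearMap.neg_apply]
      ring
    have hminS : ∀ u, f₁ w + ((g₂ w:ℝ):EReal) ≤ f₁ u + ((g₂ u:ℝ):EReal) := by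
      intro u
      rw [← hsplit u, ← hsplit w]
      have hww : ε * ‖w - w‖ = 0 := by simp
      rw [hww, EReal.coe_zero, add_zero]
      exact hwmin u
    have hfw : f w ≠ ⊤ := by
      intro hc
      apply hwtop
      show f w + ((g w:ℝ):EReal) = ⊤
      rw [hc, EReal.top_add_of_ne_bot (EReal.coe_ne_bot _)]
    obtain ⟨cf, hcf⟩ : ∃ c:ℝ, f w = (c:EReal) := ⟨_, (EReal.coe_toReal hfw (hbot w)).symm⟩
    have hf₁top : f₁ w ≠ ⊤ := by
      show f w + (((-xs) w:ℝ):EReal) ≠ ⊤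
      rw [hcf, ← EReal.coe_add]
      exact EReal.coe_ne_top _
    have hf₁bot : ∀ u, f₁ u ≠ ⊥ := fun u => by
      show f u + (((-xs) u:ℝ):EReal) ≠ ⊥
      simp only [ne_eq, EReal.add_eq_bot_iff, EReal.coe_ne_bot, or_false]
      exact hbot u
    have hconv₁ := hconv_add_linear f hbot hconv (-xs)
    have hg₂conv : ∀ p q : X, ∀ a b : ℝ, 0 ≤ a → 0 ≤ b → a + b = 1 →
        g₂ (a • p + b • q) ≤ a * g₂ p + b * g₂ q := by
      intro p q a b ha hb hab
      have hax : ∀ z : X, a • z + b • z = z := by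
        intro z; rw [← add_smul, hab, one_smul]
      have hnorm : ∀ z : X, ‖(a • p + b • q) - z‖ ≤ a * ‖p - z‖ + b * ‖q - z‖ := by
        intro z
        have h1 : a • (p - z) + b • (q - z) = (a • p + b • q) - (a • z + b • z) := by
          rw [smul_sub, smul_sub]; abel
        rw [hax z] at h1
        calc ‖(a • p + b • q) - z‖ = ‖a • (p - z) + b • (q - z)‖ := by rw [h1]
          _ ≤ ‖a • (p - z)‖ + ‖b • (q - z)‖ := norm_add_le _ _
          _ = a * ‖p - z‖ + b * ‖q - z‖ := by
              rw [norm_smul, norm_smul, Real.norm_eq_abs, Real.norm_eq_abs,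
                abs_of_nonneg ha, abs_of_nonneg hb]
      have hn1 := hnorm x
      have hn2 := hnorm w
      have hq1 : ‖(a • p + b • q) - x‖^2 ≤ a*‖p - x‖^2 + b*‖q - x‖^2 := by
        nlinarith [norm_nonneg ((a • p + b • q) - x), norm_nonneg (p - x), norm_nonneg (q - x),
          sq_nonneg (‖p - x‖ - ‖q - x‖), mul_nonneg ha hb]
      have h2sinv : (0:ℝ) ≤ (2*s)⁻¹ := by positivity
      have hq2 := mul_le_mul_of_nonneg_right hq1 h2sinv
      have hq3 := mul_le_mul_of_nonneg_left hn2 hεpos.le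
      show ‖(a • p + b • q) - x‖^2/(2*s) + ε * ‖(a • p + b • q) - w‖
          ≤ a * (‖p - x‖^2/(2*s) + ε * ‖p - w‖) + b * (‖q - x‖^2/(2*s) + ε * ‖q - w‖)
      rw [div_eq_mul_inv, div_eq_mul_inv, div_eq_mul_inv]
      linarith [hq2, hq3]
    have hg₂cont : Continuous g₂ := by
      rw [hg₂def]
      exact (((continuous_id.sub continuous_const).norm.pow 2).div_const _).add
        (continuous_const.mul (continuous_id.sub continuous_const).norm)
    obtain ⟨φ, hφ1, hφ2⟩ := sandwich f₁ g₂ w hf₁top hf₁bot hconv₁ hg₂conv hg₂cont hminS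
    have hys : ∀ u, (((xs - φ) (u - w) : ℝ) : EReal) + f w ≤ f u := by
      intro u
      have h2 := hφ2 u
      by_cases hu : f u = ⊤
      · rw [hu]; exact le_top
      obtain ⟨cu, hcu⟩ : ∃ c:ℝ, f u = (c:EReal) := ⟨_, (EReal.coe_toReal hu (hbot u)).symm⟩
      have h3 : f₁ w = ((cf + (-xs) w : ℝ):EReal) := by
        show f w + _ = _
        rw [hcf, ← EReal.coe_add]
      have h4 : f₁ u = ((cu + (-xs) u : ℝ):EReal) := by
        show f u + _ = _
        rw [hcu, ← EReal.coe_add]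
      rw [h3, h4, ← EReal.coe_add] at h2
      have h5 : cf + (-xs) w ≤ cu + (-xs) u + (φ u - φ w) := by exact_mod_cast h2
      rw [hcf, hcu, ← EReal.coe_add]
      refine EReal.coe_le_coe_iff.2 ?_
      have h6 : (xs - φ) (u - w) = (xs u - xs w) - (φ u - φ w) := by
        rw [map_sub, ContinuousLinearMap.sub_apply, ContinuousLinearMap.sub_apply]
        ring
      rw [h6]
      have h7 : (-xs) w = -(xs w) := rfl
      have h8 : (-xs) u = -(xs u) := rfl
      rw [h7, h8] at h5
      linarith
    have hpol := hpolar w (xs - φ) hys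
    have hpol' : 0 ≤ φ x - φ w := by
      have h9 : ((xs - φ) - xs) (w - x) = φ x - φ w := by
        simp only [ContinuousLinearMap.sub_apply, map_sub]
        ring
      rwa [h9] at hpol
    have hφx := hφ1 x
    have hg₂x : g₂ x = ε * ‖x - w‖ := by
      show ‖x - x‖^2/(2*s) + ε * ‖x - w‖ = _
      simp
    have hg₂w : g₂ w = ‖w - x‖^2/(2*s) := by
      show ‖w - x‖^2/(2*s) + ε * ‖w - w‖ = _
      simp
    have h2spos : (0:ℝ) < 2*s := by linarith
    have hxw : ‖x - w‖ ≤ 2*s*ε := by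
      rw [hg₂x, hg₂w, norm_sub_rev w x] at hφx
      have ht2 : ‖x - w‖^2 ≤ 2*s*ε*‖x - w‖ := by
        have h10 : ‖x - w‖^2/(2*s) ≤ ε * ‖x - w‖ := by linarith
        rw [div_le_iff₀ h2spos] at h10
        nlinarith
      rcases le_or_gt ‖x - w‖ (2*s*ε) with hle | hlt
      · exact hle
      · exfalso
        have hposn : 0 < ‖x - w‖ := lt_of_le_of_lt (by positivity) hlt
        nlinarith [ht2]
    have hwx : ‖w - x‖ ≤ ρ' := by
      rw [norm_sub_rev]
      calc ‖x - w‖ ≤ 2*s*ε := hxw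
        _ ≤ 2*s*(ρ'/(2*s)) := by
            have h11 := min_le_right (δ/4) (ρ'/(2*s))
            have h12 : ε ≤ ρ'/(2*s) := h11
            nlinarith
        _ = ρ' := by field_simp
    have hwρ : dist w x < ρ := by
      rw [dist_eq_norm]
      calc ‖w - x‖ ≤ ρ' := hwx
        _ ≤ ρ/2 := min_le_left _ _
        _ < ρ := by linarith
    have hBw : (B:EReal) < f w := hball hwρ
    rw [hcf] at hBw
    have hBw' : B < cf := by exact_mod_cast hBw
    have hup : cf + g w ≤ cv + g v + ε₁ := by
      have h12 : (cI:EReal) ≤ h v := hcIle v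
      rw [hvJ] at h12
      have h13 : cI ≤ cv + g v := by exact_mod_cast h12
      have h14 : ((cf + g w : ℝ):EReal) = ((h' w:ℝ):EReal) := by
        rw [hhw]
        show _ = f w + ((g w:ℝ):EReal)
        rw [hcf, ← EReal.coe_add]
      have h15 : cf + g w = h' w := by exact_mod_cast h14
      linarith
    have hxsw : |xs w - xs x| ≤ δ/4 := by
      have h16 : xs w - xs x = xs (w - x) := (map_sub xs w x).symm
      rw [h16]
      calc |xs (w - x)| ≤ ‖xs‖ * ‖w - x‖ := xs.le_opNorm _
        _ ≤ ‖xs‖ * (δ/(4*(‖xs‖+1))) :=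
            mul_le_mul_of_nonneg_left (hwx.trans (min_le_right _ _)) (norm_nonneg xs)
        _ ≤ δ/4 := by
            have hb4 : (0:ℝ) < 4*(‖xs‖+1) := by positivity
            rw [← mul_div_assoc, div_le_div_iff₀ hb4 (by norm_num : (0:ℝ) < 4)]
            nlinarith [norm_nonneg xs, hδ]
    have habs2 := (abs_le.1 hxsw).2
    have hgw_ge : -xs w ≤ g w := by
      show -xs w ≤ ‖w - x‖^2/(2*s) - xs w
      have h17 : (0:ℝ) ≤ ‖w - x‖^2/(2*s) := by positivity
      linarith
    have hgv : g v = ‖v - x‖^2/(2*s) - xs v := rfl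
    have hgww : g w = ‖w - x‖^2/(2*s) - xs w := rfl
    rw [hgv, hgww, hε₁] at hup
    rw [hB] at hBw'
    have hq0 : (0:ℝ) ≤ ‖w - x‖^2/(2*s) := by positivity
    linarith [hup, hBw', habs2, hδ, hq0]
  intro v
  have key2 : f x ≤ f v + ((xs x - xs v : ℝ) : EReal) := by
    apply ereal_le_of_forall_add
    intro δ' hδ'
    set s : ℝ := max 1 (‖v - x‖^2/δ') with hsdef
    have hs : 0 < s := lt_of_lt_of_le one_pos (le_max_left _ _)
    have hK : ‖v - x‖^2/(2*s) ≤ δ'/2 := by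
      have h1 : ‖v - x‖^2/δ' ≤ s := le_max_right _ _
      rw [div_le_iff₀ hδ'] at h1
      rw [div_le_iff₀ (by linarith : (0:ℝ) < 2*s)]
      nlinarith
    have h3 := key v s (δ'/2) hs (by linarith)
    refine le_trans h3 ?_
    have h4 : ((xs x - xs v + ‖v - x‖^2/(2*s) + δ'/2 : ℝ):EReal)
        ≤ ((xs x - xs v + δ' : ℝ):EReal) := by
      exact_mod_cast (by linarith : xs x - xs v + ‖v - x‖^2/(2*s) + δ'/2 ≤ xs x - xs v + δ')
    calc f v + ((xs x - xs v + ‖v - x‖^2/(2*s) + δ'/2 : ℝ):EReal)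
        ≤ f v + ((xs x - xs v + δ' : ℝ):EReal) := add_le_add_right h4 _
      _ = f v + ((xs x - xs v:ℝ):EReal) + ((δ':ℝ):EReal) := by
          rw [EReal.coe_add, ← add_assoc]
  have h5 := add_le_add_right key2 ((xs (v - x) : ℝ):EReal)
  refine le_trans h5 (le_of_eq ?_)
  have h6 : xs (v - x) = xs v - xs x := map_sub xs v x
  rw [h6, add_comm ((xs v - xs x : ℝ):EReal) _, add_assoc, ← EReal.coe_add]
  have h7 : (xs x - xs v + (xs v - xs x) : ℝ) = 0 := by ring
  rw [h7, EReal.coe_zero, add_zero]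

theorem polar_cxSub_eq_increasing [CompleteSpace X]
    (f : X → EReal) (hlsc : LowerSemicontinuous f)
    (hbot : ∀ z, f z ≠ ⊥) (hproper : ∃ z, f z ≠ ⊤)
    (hconv : ∀ x y : X, ∀ a b : ℝ, 0 ≤ a → 0 ≤ b → a + b = 1 →
      f (a • x + b • y) ≤ (a : EReal) * f x + (b : EReal) * f y)
    (x : X) :
    {xs : X →L[ℝ] ℝ | (x, xs) ∈ MonoPolar {p | p.2 ∈ cxSub f p.1}} =
      {xs : X →L[ℝ] ℝ | ∀ y : X, ∀ t ∈ Set.Icc (0:ℝ) 1,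
        f (y + t • (x - y)) - ((xs (y + t • (x - y)) : ℝ) : EReal) ≤
          f y - ((xs y : ℝ) : EReal)} := by
  ext xs
  simp only [mem_setOf_eq]
  constructor
  · intro hpolar
    have hpolar' : ∀ (y : X) (ys : X →L[ℝ] ℝ),
        (∀ v, ((ys (v - y) : ℝ) : EReal) + f y ≤ f v) → 0 ≤ (ys - xs) (y - x) := by
      intro y ys hy
      exact hpolar (y, ys) hy
    have hxsub := polar_mem_cxSub f hlsc hbot hproper hconv x xs hpolar'
    have hfx_top : f x ≠ ⊤ := by
      intro ht
      obtain ⟨z, hz⟩ := hproper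
      have h1 := hxsub z
      rw [ht] at h1
      exact hz (top_le_iff.1 (by rwa [EReal.coe_add_top] at h1))
    obtain ⟨cx, hcx⟩ : ∃ c:ℝ, f x = (c:EReal) := ⟨_, (EReal.coe_toReal hfx_top (hbot x)).symm⟩
    intro y t ht
    obtain ⟨ht0, ht1⟩ := ht
    by_cases hfy : f y = ⊤
    · rw [hfy, EReal.top_sub_coe]
      exact le_top
    obtain ⟨cy, hcy⟩ : ∃ c:ℝ, f y = (c:EReal) := ⟨_, (EReal.coe_toReal hfy (hbot y)).symm⟩
    have hzdef : y + t • (x - y) = (1-t) • y + t • x := by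
      rw [smul_sub, sub_smul, one_smul]
      abel
    have hcvx := hconv y x (1-t) t (by linarith) ht0 (by ring)
    rw [← hzdef, hcy, hcx] at hcvx
    have h2 : ((1-t:ℝ):EReal) * ((cy:ℝ):EReal) + ((t:ℝ):EReal) * ((cx:ℝ):EReal)
        = (((1-t)*cy + t*cx : ℝ):EReal) := by norm_cast
    rw [h2] at hcvx
    have hfz_top : f (y + t • (x - y)) ≠ ⊤ := by
      intro hcontr
      rw [hcontr] at hcvx
      exact EReal.coe_ne_top _ (top_le_iff.1 hcvx)
    obtain ⟨cz, hcz⟩ : ∃ c:ℝ, f (y + t • (x - y)) = (c:EReal) :=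
      ⟨_, (EReal.coe_toReal hfz_top (hbot _)).symm⟩
    rw [hcz] at hcvx
    have hcz' : cz ≤ (1-t)*cy + t*cx := by exact_mod_cast hcvx
    rw [hcz, hcy]
    have hsub := hxsub y
    rw [hcy, hcx, ← EReal.coe_add] at hsub
    have hsub' : xs (y - x) + cx ≤ cy := by exact_mod_cast hsub
    have happly : xs (y + t • (x - y)) = xs y + t * (xs x - xs y) := by
      rw [map_add, map_smul, map_sub]
      simp [smul_eq_mul]
    have hyx : xs (y - x) = xs y - xs x := map_sub xs y x
    rw [hyx] at hsub'
    rw [show ((cz:ℝ):EReal) - ((xs (y + t • (x - y)) :ℝ):EReal)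
          = ((cz - xs (y + t • (x - y)) : ℝ):EReal) from (EReal.coe_sub _ _).symm,
       show ((cy:ℝ):EReal) - ((xs y:ℝ):EReal) = ((cy - xs y : ℝ):EReal)
          from (EReal.coe_sub _ _).symm]
    refine EReal.coe_le_coe_iff.2 ?_
    rw [happly]
    have hmul := mul_nonneg ht0 (show 0 ≤ cy - cx + (xs x - xs y) by linarith)
    nlinarith [hcz']
  · intro hprop
    rintro ⟨y, ys⟩ hy
    have hy' : ∀ v, ((ys (v - y) : ℝ):EReal) + f y ≤ f v := hy
    have hfy : f y ≠ ⊤ := by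
      intro ht
      obtain ⟨z, hz⟩ := hproper
      have h1 := hy' z
      rw [ht] at h1
      exact hz (top_le_iff.1 (by rwa [EReal.coe_add_top] at h1))
    obtain ⟨cy, hcy⟩ : ∃ c:ℝ, f y = (c:EReal) := ⟨_, (EReal.coe_toReal hfy (hbot y)).symm⟩
    have h1 := hy' x
    rw [hcy, ← EReal.coe_add] at h1
    have h2 := hprop y 1 ⟨zero_le_one, le_refl 1⟩
    rw [one_smul] at h2
    have hxy : y + (x - y) = x := by abel
    rw [hxy, hcy] at h2
    have hfx_top : f x ≠ ⊤ := by
      intro ht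
      rw [ht, EReal.top_sub_coe] at h2
      rw [show ((cy:ℝ):EReal) - ((xs y:ℝ):EReal) = ((cy - xs y:ℝ):EReal)
        from (EReal.coe_sub _ _).symm] at h2
      exact EReal.coe_ne_top _ (top_le_iff.1 h2)
    obtain ⟨cx, hcx⟩ : ∃ c:ℝ, f x = (c:EReal) := ⟨_, (EReal.coe_toReal hfx_top (hbot x)).symm⟩
    rw [hcx] at h1 h2
    have h1' : ys (x - y) + cy ≤ cx := by exact_mod_cast h1
    rw [show ((cx:ℝ):EReal) - ((xs x:ℝ):EReal) = ((cx - xs x:ℝ):EReal)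
          from (EReal.coe_sub _ _).symm,
       show ((cy:ℝ):EReal) - ((xs y:ℝ):EReal) = ((cy - xs y:ℝ):EReal)
          from (EReal.coe_sub _ _).symm] at h2
    have h2' : cx - xs x ≤ cy - xs y := by exact_mod_cast h2
    show 0 ≤ (ys - xs) (y - x)
    rw [ContinuousLinearMap.sub_apply, map_sub, map_sub]
    have h3 : ys (x - y) = ys x - ys y := map_sub ys x y
    rw [h3] at h1'
    linarith
end

section
/- Let X be a real Banach space, f : X → ℝ ∪ {+∞} proper lower semicontinuous, U ⊆ X open convex, x̄ ∈ U. Suppose for every ε > 0 and every y ∈ U with y ∈ dom f, there exists (y_ε, y*_ε) with y*_ε ∈ ∂_C f(y_ε), ‖y_ε − y‖ ≤ ε, |f(y_ε) − f(y)| ≤ ε, ⟨y*_ε, y_ε − y⟩ ≤ ε, and f′(y; d) ≤ inf_{ε>0} sup ⟨∂̆_ε f(y), d⟩ for all d (the Subderivative/Subdifferential Inequality). If sup ⟨∂_C f(y), x̄ − y⟩ ≤ 0 for every y ∈ U, then f′(y; x̄ − y) ≤ 0 for every y ∈ U ∩ dom f. -/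
open Filter Topology Set

variable {X : Type*} [NormedAddCommGroup X] [NormedSpace ℝ X]

theorem clarke_minty_imp_dini_minty [CompleteSpace X]
    (f : X → EReal) (hlsc : LowerSemicontinuous f)
    (hbot : ∀ z, f z ≠ ⊥) (hproper : ∃ z, f z ≠ ⊤)
    (U : Set X) (hUo : IsOpen U) (hUc : Convex ℝ U) (xb : X) (hxb : xb ∈ U)
    (hEnl : ∀ y ∈ U, f y ≠ ⊤ → ∀ ε : ℝ, 0 < ε →
      ∃ ye : X, ∃ yse : X →L[ℝ] ℝ, yse ∈ clarkeSub f ye ∧ ‖ye - y‖ ≤ ε ∧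
        f ye - f y ≤ (ε : EReal) ∧ f y - f ye ≤ (ε : EReal) ∧ yse (ye - y) ≤ ε)
    (hSSI : ∀ y ∈ U, f y ≠ ⊤ → ∀ d : X,
      diniSub f y d ≤ ⨅ ε : {ε : ℝ // 0 < ε},
        sSup ((fun xs : X →L[ℝ] ℝ => ((xs d : ℝ) : EReal)) '' epsEnl f ε.1 y))
    (h : ∀ y ∈ U, ∀ xs ∈ clarkeSub f y, xs (xb - y) ≤ 0) :
    ∀ y ∈ U, f y ≠ ⊤ → diniSub f y (xb - y) ≤ 0 := by
  intro y hy hfy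
  by_contra hpos
  push_neg at hpos
  obtain ⟨r, hr, hball⟩ := Metric.isOpen_iff.mp hUo y hy
  obtain ⟨c, hc0, hcd⟩ := EReal.exists_between_coe_real hpos
  have hc0' : (0 : ℝ) < c := by exact_mod_cast hc0
  set ε := min c (r / 2) with hεdef
  have hε0 : 0 < ε := lt_min hc0' (by linarith)
  have key : sSup ((fun xs : X →L[ℝ] ℝ => ((xs (xb - y) : ℝ) : EReal)) '' epsEnl f ε y)
      ≤ (ε : EReal) := by
    refine sSup_le ?_
    rintro a ⟨xs, ⟨ye, hcl, hnorm, -, -, hpair⟩, rfl⟩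
    have hyeU : ye ∈ U := by
      apply hball
      rw [Metric.mem_ball, dist_eq_norm]
      have h2 : ε ≤ r / 2 := min_le_right _ _
      linarith
    have h1 : xs (xb - ye) ≤ 0 := h ye hyeU xs hcl
    have h3 : xs (xb - y) ≤ ε := by
      have heq : xb - y = (xb - ye) + (ye - y) := by abel
      rw [heq, map_add]
      linarith
    show ((xs (xb - y) : ℝ) : EReal) ≤ (ε : EReal)
    exact_mod_cast h3
  have hle : diniSub f y (xb - y) ≤ (ε : EReal) :=
    le_trans (hSSI y hy hfy (xb - y)) (le_trans (iInf_le _ ⟨ε, hε0⟩) key)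
  have hεc : (ε : EReal) ≤ (c : EReal) := by exact_mod_cast min_le_left c (r / 2)
  exact absurd (hle.trans hεc) (not_le.mpr hcd)
end

section
/- Let X be a real Banach space and f : X → ℝ ∪ {+∞} proper lower semicontinuous. Assume the Subderivative/Subdifferential Inequality holds for the Clarke subdifferential: for every x̄ ∈ dom f, every ε > 0, the set ∂̆_ε f(x̄) is nonempty and f′(x̄; d) ≤ inf_{ε>0} sup⟨∂̆_ε f(x̄), d⟩ for all d ∈ X. Then the Clarke subdifferential ∂_C f is monotone absorbing: (∂_C f)⁰ ⊆ ∂_C f, i.e., every pair (x, x*) monotonically related to the graph of ∂_C f belongs to the graph of ∂_C f. -/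
open Filter Topology Set

variable {X : Type*} [NormedAddCommGroup X] [NormedSpace ℝ X]

set_option maxHeartbeats 1000000 in
lemma ray_key (f : X → EReal) (hlsc : LowerSemicontinuous f) (hbot : ∀ z, f z ≠ ⊥)
    (hSSI : ∀ xb : X, f xb ≠ ⊤ → ∀ ε : ℝ, 0 < ε →
      (epsEnl f ε xb).Nonempty ∧ ∀ d : X,
        diniSub f xb d ≤ ⨅ ε' : {ε' : ℝ // 0 < ε'},
          sSup ((fun xs : X →L[ℝ] ℝ => ((xs d : ℝ) : EReal)) '' epsEnl f ε'.1 xb))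
    (x : X) (xstar : X →L[ℝ] ℝ)
    (hpol : ∀ xe (xs : X →L[ℝ] ℝ), xs ∈ clarkeSub f xe → 0 ≤ (xs - xstar) (xe - x)) :
    ∀ y, ((xstar (y - x) : ℝ) : EReal) + f x ≤ f y := by
  intro y
  by_contra hcon
  push_neg at hcon
  have hfyT : f y ≠ ⊤ := hcon.ne_top
  set fy := (f y).toReal with hfyd
  have hfy : (fy : EReal) = f y := EReal.coe_toReal hfyT (hbot y)
  set d := x - y with hd
  have hyx : xstar (y - x) = - xstar d := by
    rw [show y - x = -(x - y) by abel, map_neg]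
  obtain ⟨r, hr1, hr2⟩ : ∃ r : ℝ, xstar d < r ∧ ((fy + r : ℝ) : EReal) < f x := by
    by_cases hfx : f x = ⊤
    · exact ⟨xstar d + 1, by linarith, by rw [hfx]; exact EReal.coe_lt_top _⟩
    · have hfx' : ((f x).toReal : EReal) = f x := EReal.coe_toReal hfx (hbot x)
      set fx := (f x).toReal
      have hkey : fy < -xstar d + fx := by
        have : (fy : EReal) < ↑(-xstar d + fx) := by
          rw [EReal.coe_add, hfy, hfx']; rw [hyx] at hcon; exact hcon
        exact_mod_cast this
      refine ⟨(xstar d + (fx - fy)) / 2, by linarith, ?_⟩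
      rw [← hfx', EReal.coe_lt_coe_iff]; linarith
  set S : Set ℝ := {t | t ∈ Set.Icc (0:ℝ) 1 ∧ f (y + t • d) ≤ ((fy + t * r : ℝ) : EReal)} with hS
  have h0S : (0:ℝ) ∈ S := by
    refine ⟨⟨le_refl _, zero_le_one⟩, ?_⟩
    simp [← hfy]
  have hbdd : BddAbove S := ⟨1, fun t ht => ht.1.2⟩
  set τ := sSup S with hτd
  have hτ0 : 0 ≤ τ := le_csSup hbdd h0S
  have hτ1 : τ ≤ 1 := csSup_le ⟨0, h0S⟩ (fun t ht => ht.1.2)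
  set c := y + τ • d with hc
  have hτS : f c ≤ ((fy + τ * r : ℝ) : EReal) := by
    by_contra hcc
    push_neg at hcc
    obtain ⟨w, hw1, hw2⟩ := EReal.exists_between_coe_real hcc
    have hw1' : fy + τ * r < w := EReal.coe_lt_coe_iff.1 hw1
    have hev : ∀ᶠ t in 𝓝 τ, (w : EReal) < f (y + t • d) := by
      have hcont : Continuous fun t : ℝ => y + t • d := by continuity
      exact (hcont.tendsto τ).eventually (hlsc c _ hw2)
    rw [Metric.eventually_nhds_iff] at hev
    obtain ⟨δ, hδ, hδev⟩ := hev
    have hgap : 0 < w - (fy + τ * r) := by linarith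
    set δ' := min δ ((w - (fy + τ * r)) / (|r| + 1)) with hδ'
    have hδ'pos : 0 < δ' := lt_min hδ (div_pos hgap (by positivity))
    obtain ⟨t, htS, htlt⟩ := exists_lt_of_lt_csSup ⟨0, h0S⟩ (show τ - δ' < sSup S by rw [← hτd]; linarith)
    have htτ : t ≤ τ := le_csSup hbdd htS
    have hdist : dist t τ < δ := by
      rw [Real.dist_eq, abs_sub_lt_iff]
      constructor
      · linarith [hδ'pos, lt_of_lt_of_le hδ'pos (min_le_left δ _)]
      · have := min_le_left δ ((w - (fy + τ * r)) / (|r| + 1))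
        linarith
    have hw3 : w < fy + t * r := EReal.coe_lt_coe_iff.1 (lt_of_lt_of_le (hδev hdist) htS.2)
    have habs1 : |t - τ| < δ' := by rw [abs_sub_lt_iff]; constructor <;> linarith
    have habs : (t - τ) * r ≤ |t - τ| * |r| := by rw [← abs_mul]; exact le_abs_self _
    have hδle : δ' * (|r| + 1) ≤ w - (fy + τ * r) := by
      rw [← le_div_iff₀ (by positivity)]; exact min_le_right _ _
    nlinarith [abs_nonneg r, abs_nonneg (t - τ),
      mul_le_mul_of_nonneg_right habs1.le (abs_nonneg r)]
  have hτne1 : τ ≠ 1 := by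
    intro h
    have hcx : c = x := by rw [hc, h, one_smul, hd]; abel
    rw [h, hcx, one_mul] at hτS
    exact absurd (lt_of_lt_of_le hr2 hτS) (lt_irrefl _)
  have hσ : 0 < 1 - τ := by rcases lt_or_eq_of_le hτ1 with h | h; linarith; exact absurd h hτne1
  have hcT : f c ≠ ⊤ := (lt_of_le_of_lt hτS (EReal.coe_lt_top _)).ne
  have hdini : (r : EReal) ≤ diniSub f c d := by
    unfold diniSub
    refine Filter.le_liminf_of_le (by isBoundedDefault) ?_
    filter_upwards [Ioc_mem_nhdsGT_of_mem (show (0:ℝ) ∈ Set.Ico (0:ℝ) (1 - τ) from ⟨le_refl _, hσ⟩)]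
      with h hh
    have hts : τ + h ∉ S := fun hmem => absurd (le_csSup hbdd hmem) (by rw [← hτd]; linarith [hh.1])
    have hicc : τ + h ∈ Set.Icc (0:ℝ) 1 := ⟨by linarith [hh.1], by linarith [hh.2]⟩
    have hlt : ((fy + (τ + h) * r : ℝ) : EReal) < f (y + (τ + h) • d) := by
      by_contra hle
      push_neg at hle
      exact hts ⟨hicc, hle⟩
    have hch : c + h • d = y + (τ + h) • d := by rw [hc, add_smul]; abel
    have hsub : ((h * r : ℝ) : EReal) ≤ f (c + h • d) - f c := by
      have := EReal.sub_le_sub (le_of_lt (hch ▸ hlt)) hτS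
      refine le_trans (le_of_eq ?_) this
      rw [← EReal.coe_sub]; congr 1; ring
    rw [EReal.le_div_iff_mul_le (by exact_mod_cast hh.1) (EReal.coe_ne_top _)]
    refine le_trans (le_of_eq ?_) hsub
    rw [← EReal.coe_mul]; congr 1; ring
  have hK : 0 < r - xstar d := by linarith
  set ε := (1 - τ) * (r - xstar d) / (4 * (1 + ‖xstar‖)) with hεd
  have hε : 0 < ε := by positivity
  have hSi := (hSSI c hcT ε hε).2 d
  have hsup : (r : EReal) ≤ sSup ((fun xs : X →L[ℝ] ℝ => ((xs d : ℝ) : EReal)) '' epsEnl f ε c) :=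
    le_trans (le_trans hdini hSi) (iInf_le _ (⟨ε, hε⟩ : {ε' : ℝ // 0 < ε'}))
  have hlt2 : (((xstar d + r) / 2 : ℝ) : EReal) <
      sSup ((fun xs : X →L[ℝ] ℝ => ((xs d : ℝ) : EReal)) '' epsEnl f ε c) :=
    lt_of_lt_of_le (EReal.coe_lt_coe_iff.2 (by linarith)) hsup
  obtain ⟨a, ⟨xs, hxs, rfl⟩, hra⟩ := lt_sSup_iff.1 hlt2
  have hr'xs : (xstar d + r) / 2 < xs d := EReal.coe_lt_coe_iff.1 hra
  obtain ⟨xe, hcl, hnear, -, -, hpair⟩ := hxs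
  have hp := hpol xe xs hcl
  have hxe : xe - x = (xe - c) + (τ - 1) • d := by
    rw [hc, hd]; module
  rw [hxe] at hp
  simp only [ContinuousLinearMap.sub_apply, map_add, map_smul, smul_eq_mul] at hp
  have hCb : |xstar (xe - c)| ≤ ‖xstar‖ * ε := by
    refine le_trans ?_ (mul_le_mul_of_nonneg_left hnear (norm_nonneg xstar))
    rw [← Real.norm_eq_abs]
    exact xstar.le_opNorm _
  have habs := abs_le.1 hCb
  have hεK : ε * (4 * (1 + ‖xstar‖)) = (1 - τ) * (r - xstar d) := by
    rw [hεd]; field_simp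
  nlinarith [mul_lt_mul_of_pos_left hr'xs hσ, mul_pos hσ hK, norm_nonneg xstar,
    mul_nonneg (norm_nonneg xstar) hε.le]


set_option maxHeartbeats 1000000 in
lemma cx_to_clarke (f : X → EReal) (hbot : ∀ z, f z ≠ ⊥) (x : X) (xstar : X →L[ℝ] ℝ)
    (hfxT : f x ≠ ⊤)
    (hcx : ∀ y, ((xstar (y - x) : ℝ) : EReal) + f x ≤ f y) :
    xstar ∈ clarkeSub f x := by
  intro d
  have hfx : (((f x).toReal : ℝ) : EReal) = f x := EReal.coe_toReal hfxT (hbot x)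
  set fx := (f x).toReal
  set N := ‖xstar‖ with hN
  have h2 : ∀ δ : {δ : ℝ // 0 < δ},
      ((xstar d - δ.1 * N : ℝ) : EReal) ≤
        Filter.limsup
          (fun p : ℝ × X =>
            ⨅ d' : {d' : X // ‖d' - d‖ ≤ δ.1},
              (f (p.2 + p.1 • (d' : X)) - f p.2) / (p.1 : EReal))
          ((𝓝[>] (0:ℝ)) ×ˢ (𝓝 x ⊓ Filter.comap f (𝓝 (f x)))) := by
    intro δ
    have hslice : (𝓝[>] (0:ℝ)) ×ˢ (pure x : Filter X) ≤
        (𝓝[>] (0:ℝ)) ×ˢ (𝓝 x ⊓ Filter.comap f (𝓝 (f x))) := by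
      refine Filter.prod_mono le_rfl (le_inf (pure_le_nhds x) ?_)
      rw [← Filter.map_le_iff_le_comap, Filter.map_pure]
      exact pure_le_nhds _
    have hev : ∀ᶠ p : ℝ × X in (𝓝[>] (0:ℝ)) ×ˢ (pure x : Filter X),
        ((xstar d - δ.1 * N : ℝ) : EReal) ≤
          ⨅ d' : {d' : X // ‖d' - d‖ ≤ δ.1},
            (f (p.2 + p.1 • (d' : X)) - f p.2) / (p.1 : EReal) := by
      filter_upwards [Filter.prod_mem_prod self_mem_nhdsWithin
        (Filter.mem_pure.2 (Set.mem_singleton x))] with p hp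
      obtain ⟨hp1, hp2⟩ := hp
      have hp2' : p.2 = x := hp2
      have hp1' : (0:ℝ) < p.1 := hp1
      rw [hp2']
      refine le_iInf ?_
      rintro ⟨d', hd'⟩
      rw [EReal.le_div_iff_mul_le (by exact_mod_cast hp1') (EReal.coe_ne_top _)]
      rw [← hfx, EReal.le_sub_iff_add_le (Or.inl (EReal.coe_ne_bot fx))
        (Or.inl (EReal.coe_ne_top fx))]
      have hy := hcx (x + p.1 • d')
      rw [add_sub_cancel_left, map_smul, smul_eq_mul, ← hfx] at hy
      refine le_trans ?_ hy
      rw [← EReal.coe_mul, ← EReal.coe_add, ← EReal.coe_add, EReal.coe_le_coe_iff]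
      have hdd : xstar d - xstar d' ≤ N * δ.1 := by
        have h1 : xstar d - xstar d' = xstar (d - d') := by rw [map_sub]
        have h2 : xstar (d - d') ≤ |xstar (d - d')| := le_abs_self _
        have h3 : |xstar (d - d')| ≤ N * ‖d - d'‖ := by
          rw [← Real.norm_eq_abs]; exact xstar.le_opNorm _
        have h4 : ‖d - d'‖ ≤ δ.1 := by rw [norm_sub_rev]; exact hd'
        nlinarith [norm_nonneg (d - d'), le_trans h3
          (mul_le_mul_of_nonneg_left h4 (norm_nonneg xstar))]
      nlinarith
    haveI : ((𝓝[>] (0:ℝ)) ×ˢ (pure x : Filter X)).NeBot := by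
      exact Filter.prod_neBot.2 ⟨by infer_instance, by infer_instance⟩
    calc ((xstar d - δ.1 * N : ℝ) : EReal)
        = Filter.limsup (fun _ : ℝ × X => ((xstar d - δ.1 * N : ℝ) : EReal))
            ((𝓝[>] (0:ℝ)) ×ˢ (pure x : Filter X)) := (Filter.limsup_const _).symm
      _ ≤ Filter.limsup
            (fun p : ℝ × X =>
              ⨅ d' : {d' : X // ‖d' - d‖ ≤ δ.1},
                (f (p.2 + p.1 • (d' : X)) - f p.2) / (p.1 : EReal))
            ((𝓝[>] (0:ℝ)) ×ˢ (pure x : Filter X)) := Filter.limsup_le_limsup hev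
      _ ≤ _ := Filter.limsup_le_limsup_of_le hslice
  have h1 : ((xstar d : ℝ) : EReal) ≤
      ⨆ δ : {δ : ℝ // 0 < δ}, ((xstar d - δ.1 * N : ℝ) : EReal) := by
    rw [le_iSup_iff]
    intro b hb
    induction b with
    | bot =>
        have := hb ⟨1, one_pos⟩
        rw [le_bot_iff] at this
        exact absurd this (EReal.coe_ne_bot _)
    | coe br =>
        rw [EReal.coe_le_coe_iff]
        apply le_of_forall_pos_le_add
        intro ε hε
        by_cases hN0 : N = 0
        · have := EReal.coe_le_coe_iff.1 (hb ⟨1, one_pos⟩)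
          rw [hN0] at this; linarith
        · have hN' : 0 < N := lt_of_le_of_ne (norm_nonneg _) (Ne.symm hN0)
          have h := EReal.coe_le_coe_iff.1 (hb ⟨ε / N, div_pos hε hN'⟩)
          have h2 : ε / N * N = ε := div_mul_cancel₀ _ hN0
          simp only at h
          linarith
    | top => exact le_top
  exact le_trans h1 (iSup_mono h2)


theorem clarkeSub_monotone_absorbing [CompleteSpace X]
    (f : X → EReal) (hlsc : LowerSemicontinuous f)
    (hbot : ∀ z, f z ≠ ⊥) (hproper : ∃ z, f z ≠ ⊤)
    (hSSI : ∀ xb : X, f xb ≠ ⊤ → ∀ ε : ℝ, 0 < ε →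
      (epsEnl f ε xb).Nonempty ∧ ∀ d : X,
        diniSub f xb d ≤ ⨅ ε' : {ε' : ℝ // 0 < ε'},
          sSup ((fun xs : X →L[ℝ] ℝ => ((xs d : ℝ) : EReal)) '' epsEnl f ε'.1 xb)) :
    MonoPolar {p : X × (X →L[ℝ] ℝ) | p.2 ∈ clarkeSub f p.1} ⊆
      {p : X × (X →L[ℝ] ℝ) | p.2 ∈ clarkeSub f p.1} := by
  rintro ⟨x, xstar⟩ hx
  simp only [Set.mem_setOf_eq] at hx ⊢
  have hpol : ∀ xe (xs : X →L[ℝ] ℝ), xs ∈ clarkeSub f xe → 0 ≤ (xs - xstar) (xe - x) :=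
    fun xe xs h => hx (xe, xs) h
  have hcx : ∀ y, ((xstar (y - x) : ℝ) : EReal) + f x ≤ f y :=
    ray_key f hlsc hbot hSSI x xstar hpol
  have hfxT : f x ≠ ⊤ := by
    obtain ⟨z, hz⟩ := hproper
    intro h
    have hle := hcx z
    rw [h, EReal.add_top_of_ne_bot (EReal.coe_ne_bot _)] at hle
    exact hz (top_le_iff.1 hle)
  exact cx_to_clarke f hbot x xstar hfxT hcx
end

section
/- Let X be a real Banach space, C ⊆ X convex, x̄ ∈ C, and f : X → ℝ ∪ {+∞} proper lower semicontinuous. If there exist y ∈ C and ȳ ∈ [y, x̄] with f(ȳ) > f(y), then there exists y₀ ∈ C with f′(y₀; x̄ − y₀) > 0, where f′ is the lower Dini subderivative. -/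
open Filter Topology Set

variable {X : Type*} [NormedAddCommGroup X] [NormedSpace ℝ X]

lemma key1d (g : ℝ → EReal) (hg : LowerSemicontinuous g)
    (b : ℝ) (hb : 0 < b) (hgt : g 0 < g b) :
    ∃ t0 ∈ Ico (0:ℝ) b, ∃ μ : ℝ, 0 < μ ∧ ∀ τ : ℝ, 0 < τ → t0 + τ ≤ b →
      ((μ * τ : ℝ) : EReal) ≤ g (t0 + τ) - g t0 := by
  obtain ⟨l1, hl1, hl1'⟩ := EReal.exists_between_coe_real hgt
  obtain ⟨l2, hl2, hl2'⟩ := EReal.exists_between_coe_real hl1'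
  have hl12 : l1 < l2 := by exact_mod_cast hl2
  set μ : ℝ := (l2 - l1) / b with hμdef
  have hμ : 0 < μ := div_pos (by linarith) hb
  set S : Set ℝ := {t | t ∈ Icc 0 b ∧ g t ≤ ((l1 + μ * t : ℝ) : EReal)} with hS
  have h0S : (0:ℝ) ∈ S := by
    constructor
    · exact ⟨le_refl _, hb.le⟩
    · simpa using hl1.le
  have hSbdd : BddAbove S := ⟨b, fun t ht => ht.1.2⟩
  have hSne : S.Nonempty := ⟨0, h0S⟩
  set t0 : ℝ := sSup S with ht0def
  have ht00 : 0 ≤ t0 := le_csSup hSbdd h0S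
  have ht0b : t0 ≤ b := csSup_le hSne fun t ht => ht.1.2
  -- g t0 ≤ l1 + μ t0
  have hkey : g t0 ≤ ((l1 + μ * t0 : ℝ) : EReal) := by
    by_contra hcon
    push_neg at hcon
    obtain ⟨c, hc1, hc2⟩ := EReal.exists_between_coe_real hcon
    have hev1 : ∀ᶠ t in 𝓝 t0, (c : EReal) < g t := hg t0 _ hc2
    have hev2 : ∀ᶠ t in 𝓝 t0, l1 + μ * t < c := by
      have hcont : Continuous fun t : ℝ => l1 + μ * t := by continuity
      have : l1 + μ * t0 < c := by exact_mod_cast hc1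
      exact (hcont.continuousAt).eventually_lt continuousAt_const this
    obtain ⟨ε, hε, hball⟩ := Metric.eventually_nhds_iff.1 (hev1.and hev2)
    obtain ⟨t, htS, ht⟩ := exists_lt_of_lt_csSup hSne (by linarith : t0 - ε < t0)
    have htle : t ≤ t0 := le_csSup hSbdd htS
    have hdist : dist t t0 < ε := by
      rw [Real.dist_eq, abs_lt]; constructor <;> linarith
    obtain ⟨hg1, hg2⟩ := hball hdist
    have : g t ≤ ((l1 + μ * t : ℝ) : EReal) := htS.2
    have : (c : EReal) ≤ ((l1 + μ * t : ℝ) : EReal) := le_trans hg1.le this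
    have : (c : ℝ) ≤ l1 + μ * t := by exact_mod_cast this
    linarith
  have ht0lt : t0 < b := by
    rcases lt_or_eq_of_le ht0b with h | h
    · exact h
    · exfalso
      rw [h] at hkey
      have hmb : l1 + μ * b = l2 := by rw [hμdef]; field_simp; ring
      rw [hmb] at hkey
      exact absurd (lt_of_le_of_lt hkey hl2') (lt_irrefl _)
  refine ⟨t0, ⟨ht00, ht0lt⟩, μ, hμ, fun τ hτ hτb => ?_⟩
  have hnot : t0 + τ ∉ S := fun hmem => by
    have := le_csSup hSbdd hmem; linarith
  have hIcc : t0 + τ ∈ Icc 0 b := ⟨by linarith, hτb⟩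
  have hgτ : ((l1 + μ * (t0 + τ) : ℝ) : EReal) ≤ g (t0 + τ) := by
    by_contra hc
    push_neg at hc
    exact hnot ⟨hIcc, hc.le⟩
  calc ((μ * τ : ℝ) : EReal)
      = ((l1 + μ * (t0 + τ) : ℝ) : EReal) - ((l1 + μ * t0 : ℝ) : EReal) := by
        rw [← EReal.coe_sub]; congr 1; ring
    _ ≤ g (t0 + τ) - g t0 := EReal.sub_le_sub hgτ hkey

theorem not_increasing_imp_pos_dini [CompleteSpace X]
    (f : X → EReal) (hlsc : LowerSemicontinuous f)
    (hbot : ∀ z, f z ≠ ⊥) (hproper : ∃ z, f z ≠ ⊤)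
    (C : Set X) (hC : Convex ℝ C) (xb : X) (hxb : xb ∈ C)
    (y : X) (hy : y ∈ C) (yb : X) (hyb : yb ∈ segment ℝ y xb)
    (hgt : f y < f yb) :
    ∃ y0 ∈ C, 0 < diniSub f y0 (xb - y0) := by
  obtain ⟨a, b, ha, hb, hab, hyb'⟩ := hyb
  set d : X := xb - y with hd
  have hxbd : xb = y + d := by rw [hd]; abel
  have hybe : yb = y + b • d := by
    rw [← hyb', hd]
    have haa : a = 1 - b := by linarith
    rw [haa]; module
  have hbpos : 0 < b := by
    rcases lt_or_eq_of_le hb with h | h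
    · exact h
    · exfalso
      rw [← h] at hybe
      simp at hybe
      rw [hybe] at hgt
      exact lt_irrefl _ hgt
  have hb1 : b ≤ 1 := by linarith
  set g : ℝ → EReal := fun t => f (y + t • d) with hg
  have hglsc : LowerSemicontinuous g := hlsc.comp (continuous_const.add (continuous_id.smul continuous_const))
  have hg0 : g 0 = f y := by simp [hg]
  have hgb : g b = f yb := by rw [hg, hybe]
  obtain ⟨t0, ⟨ht00, ht0b⟩, μ, hμ, hineq⟩ :=
    key1d g hglsc b hbpos (by rw [hg0, hgb]; exact hgt)
  refine ⟨y + t0 • d, ?_, ?_⟩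
  · have := hC hy hxb (by linarith : (0:ℝ) ≤ 1 - t0) (le_trans ht00 (le_refl t0)) (by ring)
    convert this using 1
    rw [hxbd]; module
  · set c : ℝ := 1 - t0 with hc
    have hcpos : 0 < c := by rw [hc]; linarith
    have hfy0 : f (y + t0 • d) = g t0 := rfl
    have hpt : ∀ t : ℝ, y + t0 • d + t • (xb - (y + t0 • d)) = y + (t0 + t * c) • d := by
      intro t
      rw [hxbd, hc]; module
    have hev : ∀ᶠ t : ℝ in 𝓝[>] 0,
        ((μ * c : ℝ) : EReal) ≤ (f (y + t0 • d + t • (xb - (y + t0 • d))) - f (y + t0 • d)) / (t : EReal) := by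
      filter_upwards [Ioc_mem_nhdsGT (div_pos (by linarith) hcpos : (0:ℝ) < (b - t0) / c)]
        with t ht
      obtain ⟨ht1, ht2⟩ := ht
      rw [hpt t, hfy0]
      have hτ : 0 < t * c := mul_pos ht1 hcpos
      have hτb : t0 + t * c ≤ b := by
        have h1 : t * c ≤ ((b - t0) / c) * c :=
          mul_le_mul_of_nonneg_right ht2 hcpos.le
        rw [div_mul_cancel₀ _ hcpos.ne'] at h1
        linarith
      have hkey := hineq (t * c) hτ hτb
      rw [EReal.le_div_iff_mul_le (by exact_mod_cast ht1) (by simp)]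
      calc ((μ * c : ℝ) : EReal) * (t : EReal) = ((μ * (t * c) : ℝ) : EReal) := by
            rw [← EReal.coe_mul]; congr 1; ring
        _ ≤ _ := hkey
    have hliminf : ((μ * c : ℝ) : EReal) ≤ diniSub f (y + t0 • d) (xb - (y + t0 • d)) :=
      Filter.le_liminf_of_le (by isBoundedDefault) hev
    refine lt_of_lt_of_le ?_ hliminf
    exact_mod_cast mul_pos hμ hcpos
end
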